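/- arXiv:0901.3215 — 9 statements merged into one kernel-verified Lean document; each statement's English description precedes it below -/
import Mathlib

section
/- For the seed Q_p,q = {0,...,p-1} ∪ {p+1,...,p+q} (pattern #^p - #^q) with p ≥ q ≥ 1, the longest binary word in (1*0)^1 1* (exactly one zero) not detected by Q_p,q is 1^{p-1} 0 1^{p+q}, of length 2p+q. Consequently Q_p,q solves the (m,1)-problem for all m ≥ 2p+q+1 and fails for m = 2p+q. -/
/-- Number of zeros of word `w` among positions `0 .. m-1`. -/
def zerosIn (m : ℕ) (w : ℕ → Bool) : ℕ :=
  ((Finset.range m).filter (fun j => w j = false)).card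

/-- Seed `Q` matches word `w` of length `m` at position `i`. -/
def MatchesAt (Q : Finset ℕ) (m : ℕ) (w : ℕ → Bool) (i : ℕ) : Prop :=
  ∀ p ∈ Q, i + p < m ∧ w (i + p) = true

/-- Seed `Q` detects word `w` of length `m`. -/
def Detects (Q : Finset ℕ) (m : ℕ) (w : ℕ → Bool) : Prop :=
  ∃ i, MatchesAt Q m w i

/-- Seed `Q` solves the linear `(m,k)`-problem. -/
def Solves (Q : Finset ℕ) (m k : ℕ) : Prop :=
  ∀ w : ℕ → Bool, zerosIn m w ≤ k → Detects Q m w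

/-- A family of seeds solves the linear `(m,k)`-problem. -/
def FSolves (F : Set (Finset ℕ)) (m k : ℕ) : Prop :=
  ∀ w : ℕ → Bool, zerosIn m w ≤ k → ∃ Q ∈ F, Detects Q m w

/-- Seed `Q` solves the cyclic `(m,k)`-problem. -/
def CSolves (Q : Finset ℕ) (m k : ℕ) : Prop :=
  ∀ w : ℕ → Bool, zerosIn m w ≤ k →
    ∃ j < m, ∀ p ∈ Q, w ((j + p) % m) = true

/-- The seed `#^p - #^q` : matching positions `0..p-1` and `p+1..p+q`. -/
def Qpq (p q : ℕ) : Finset ℕ := Finset.range p ∪ Finset.Icc (p+1) (p+q)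

/-- The `k`-critical length of a seed: least `m` such that it solves the `(m,k)`-problem. -/
noncomputable def critLen (Q : Finset ℕ) (k : ℕ) : ℕ := sInf {m | Solves Q m k}

lemma mem_Qpq {p q j : ℕ} : j ∈ Qpq p q ↔ j < p ∨ (p + 1 ≤ j ∧ j ≤ p + q) := by
  simp [Qpq]

lemma exists_z (m : ℕ) (w : ℕ → Bool) (h : zerosIn m w ≤ 1) :
    ∃ z, ∀ j, j < m → j ≠ z → w j = true := by
  unfold zerosIn at h
  rcases Finset.eq_empty_or_nonempty ((Finset.range m).filter (fun j => w j = false)) with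
    he | ⟨z, hz⟩
  · refine ⟨m, fun j hj _ => ?_⟩
    by_contra hw
    have hwf : w j = false := by
      cases hwj : w j
      · rfl
      · exact absurd hwj hw
    have : j ∈ (Finset.range m).filter (fun j => w j = false) := by
      simp [Finset.mem_filter, Finset.mem_range, hj, hwf]
    rw [he] at this
    simp at this
  · refine ⟨z, fun j hj hne => ?_⟩
    by_contra hw
    have hwf : w j = false := by
      cases hwj : w j
      · rfl
      · exact absurd hwj hw
    have hjmem : j ∈ (Finset.range m).filter (fun j => w j = false) := by
      simp [Finset.mem_filter, Finset.mem_range, hj, hwf]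
    have := Finset.card_le_one.mp h j hjmem z hz
    exact hne this

lemma detects_of (p q m : ℕ) (hq : 1 ≤ q) (hpq : q ≤ p) (hm : 2*p+q+1 ≤ m)
    (w : ℕ → Bool) (z : ℕ) (hz : ∀ j, j < m → j ≠ z → w j = true) :
    Detects (Qpq p q) m w := by
  by_cases h1 : z < p
  · refine ⟨z + 1, fun r hr => ?_⟩
    rw [mem_Qpq] at hr
    exact ⟨by omega, hz _ (by omega) (by omega)⟩
  · by_cases h2 : z ≤ p + q
    · refine ⟨z - p, fun r hr => ?_⟩
      rw [mem_Qpq] at hr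
      exact ⟨by omega, hz _ (by omega) (by omega)⟩
    · refine ⟨0, fun r hr => ?_⟩
      rw [mem_Qpq] at hr
      exact ⟨by omega, hz _ (by omega) (by omega)⟩

lemma not_detects_small (p q m : ℕ) (hq : 1 ≤ q) (hpq : q ≤ p) (hm : m ≤ 2*p+q) :
    ¬ Detects (Qpq p q) m (fun j => decide (j ≠ p - 1)) := by
  have hp : 1 ≤ p := le_trans hq hpq
  rintro ⟨i, hi⟩
  have h1 := (hi (p + q) (by rw [mem_Qpq]; omega)).1
  have hip : i < p := by omega
  have h2 := (hi (p - 1 - i) (by rw [mem_Qpq]; omega)).2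
  have heq : i + (p - 1 - i) = p - 1 := by omega
  rw [heq] at h2
  simp at h2

/-- for `p ≥ q ≥ 1`, the longest binary word with exactly one zero
not detected by `#^p - #^q` is `1^{p-1} 0 1^{p+q}` of length `2p+q`; consequently
the seed solves the `(m,1)`-problem iff `m ≥ 2p+q+1`. -/
theorem stmt2 (p q : ℕ) (hq : 1 ≤ q) (hpq : q ≤ p) :
    (zerosIn (2*p+q) (fun j => decide (j ≠ p - 1)) = 1 ∧
      ¬ Detects (Qpq p q) (2*p+q) (fun j => decide (j ≠ p - 1))) ∧
    (∀ m : ℕ, ∀ w : ℕ → Bool, zerosIn m w = 1 → ¬ Detects (Qpq p q) m w → m ≤ 2*p+q) ∧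
    (∀ m : ℕ, Solves (Qpq p q) m 1 ↔ 2*p+q+1 ≤ m) := by
  have hp : 1 ≤ p := le_trans hq hpq
  have hsub : ∀ m : ℕ,
      ((Finset.range m).filter (fun j => (decide (j ≠ p - 1) : Bool) = false)) ⊆ {p - 1} := by
    intro m j hj
    simp only [Finset.mem_filter, Finset.mem_range, decide_eq_false_iff_not, not_not] at hj
    simp [hj.2]
  refine ⟨⟨?_, not_detects_small p q _ hq hpq le_rfl⟩, ?_, ?_⟩
  · unfold zerosIn
    have : ((Finset.range (2*p+q)).filter (fun j => (decide (j ≠ p - 1) : Bool) = false))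
        = {p - 1} := by
      apply Finset.Subset.antisymm (hsub _)
      intro j hj
      simp only [Finset.mem_singleton] at hj
      subst hj
      exact Finset.mem_filter.mpr ⟨Finset.mem_range.mpr (by omega), by simp⟩
    rw [this]
    simp
  · intro m w hz hnd
    by_contra hmle
    obtain ⟨z, hzz⟩ := exists_z m w (by omega)
    exact hnd (detects_of p q m hq hpq (by omega) w z hzz)
  · intro m
    constructor
    · intro hs
      by_contra hmle
      have h1 : zerosIn m (fun j => decide (j ≠ p - 1)) ≤ 1 := by
        unfold zerosIn
        calc _ ≤ ({p - 1} : Finset ℕ).card := Finset.card_le_card (hsub m)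
        _ = 1 := by simp
      exact not_detects_small p q m hq hpq (by omega) (hs _ h1)
    · intro hm w hw
      obtain ⟨z, hzz⟩ := exists_z m w hw
      exact detects_of p q m hq hpq hm w z hzz
end

section
/- Let Q = #^p - #^q with p ≥ 2q+1, p,q ≥ 1, and let k ≥ 1. The longest word in (1*0)^k 1* (exactly k zeros) not detected by Q is (1^{p-1} 0)^k 1^{p+q}, of length (k+1)p + q. Hence Q solves the (m,k)-problem exactly for m ≥ (k+1)p + q + 1. -/
/- ### Auxiliary lemmas -/

lemma zerosIn_mono (w : ℕ → Bool) {m m' : ℕ} (h : m ≤ m') : zerosIn m w ≤ zerosIn m' w :=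
  Finset.card_le_card (Finset.filter_subset_filter _ (Finset.range_subset_range.2 h))

lemma zerosIn_lt (w : ℕ → Bool) {z m : ℕ} (hz : z < m) (hw : w z = false) :
    zerosIn z w < zerosIn m w := by
  have h1 : zerosIn (z+1) w = zerosIn z w + 1 := by
    unfold zerosIn
    rw [Finset.range_add_one, Finset.filter_insert, if_pos hw,
      Finset.card_insert_of_notMem (by simp)]
  have h2 := zerosIn_mono w (show z+1 ≤ m from hz)
  omega

lemma detects_mono {Q : Finset ℕ} {m m' : ℕ} {w : ℕ → Bool} (h : m ≤ m') :
    Detects Q m w → Detects Q m' w := by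
  rintro ⟨i, hi⟩
  exact ⟨i, fun j hj => ⟨lt_of_lt_of_le (hi j hj).1 h, (hi j hj).2⟩⟩

lemma matches_of (p q m : ℕ) (w : ℕ → Bool) (i : ℕ)
    (hm : i + p + q < m)
    (h1 : ∀ j, i ≤ j → j < i + p → w j = true)
    (h2 : ∀ j, i + p < j → j ≤ i + p + q → w j = true) :
    MatchesAt (Qpq p q) m w i := by
  intro j hj
  rw [Qpq, Finset.mem_union, Finset.mem_range, Finset.mem_Icc] at hj
  rcases hj with h | h
  · exact ⟨by omega, h1 (i+j) (by omega) (by omega)⟩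
  · exact ⟨by omega, h2 (i+j) (by omega) (by omega)⟩

lemma ones_of_zerosIn_eq_zero {m : ℕ} {w : ℕ → Bool} (h : zerosIn m w = 0) :
    ∀ y, y < m → w y = true := by
  intro y hy
  by_contra hb
  have hf : w y = false := by simpa using hb
  have hmem : y ∈ (Finset.range m).filter (fun j => w j = false) := by
    simp [Finset.mem_filter, Finset.mem_range, hy, hf]
  rw [zerosIn, Finset.card_eq_zero] at h
  simp [h] at hmem

lemma allones_detect (p q m : ℕ) (w : ℕ → Bool) (h : p + q < m)
    (ones : ∀ y, y < m → w y = true) : Detects (Qpq p q) m w :=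
  ⟨0, matches_of p q m w 0 (by omega) (fun j _ hj => ones j (by omega))
    (fun j _ hj => ones j (by omega))⟩

/-- Main combinatorial lemma: a word of length `m` with at most `t` zeros that is
not detected by `#^p - #^q` satisfies `m ≤ (t+1)p + q`; moreover if it has a zero
within the last `p` positions then `m ≤ (t+1)p - 1`. -/
lemma main_bound (p q : ℕ) (hq : 1 ≤ q) (hp : 2*q+1 ≤ p) :
    ∀ t m (w : ℕ → Bool), zerosIn m w ≤ t → ¬ Detects (Qpq p q) m w →
      m ≤ (t+1)*p + q ∧ (∀ z, z < m → w z = false → m ≤ z + p → m + 1 ≤ (t+1)*p) := by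
  intro t
  induction t with
  | zero =>
    intro m w hz hnd
    have h0 : zerosIn m w = 0 := Nat.le_zero.mp hz
    have ones := ones_of_zerosIn_eq_zero h0
    constructor
    · by_contra hc
      push_neg at hc
      have e : (0+1)*p = p := by ring
      exact hnd (allones_detect p q m w (by omega) ones)
    · intro z hzm hzf _
      have := ones z hzm
      simp [hzf] at this
  | succ t ih =>
    intro m w hz hnd
    have e : (t+1+1)*p = (t+1)*p + p := by ring
    have hp1 : p ≤ (t+1)*p := Nat.le_mul_of_pos_left p (by omega)
    by_cases h0 : zerosIn m w = 0
    · have ones := ones_of_zerosIn_eq_zero h0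
      constructor
      · by_contra hc
        push_neg at hc
        exact hnd (allones_detect p q m w (by omega) ones)
      · intro z hzm hzf _
        have := ones z hzm
        simp [hzf] at this
    · -- there is a zero; take the largest one
      set S := (Finset.range m).filter (fun j => w j = false) with hSdef
      have hSne : S.Nonempty := Finset.card_pos.mp (by
        have : 0 < zerosIn m w := Nat.pos_of_ne_zero h0
        rw [zerosIn] at this
        exact this)
      set z := S.max' hSne with hzdef
      have hzS : z ∈ S := S.max'_mem hSne
      have hzm : z < m := Finset.mem_range.mp (Finset.mem_filter.mp hzS).1
      have hzf : w z = false := (Finset.mem_filter.mp hzS).2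
      have hmax : ∀ y, z < y → y < m → w y = true := by
        intro y hy hym
        by_contra hb
        have hf : w y = false := by simpa using hb
        have hmem : y ∈ S := Finset.mem_filter.mpr ⟨Finset.mem_range.mpr hym, hf⟩
        have := S.le_max' y hmem
        omega
      have hzc : zerosIn z w ≤ t := by
        have := zerosIn_lt w hzm hzf
        omega
      have hDz : ¬ Detects (Qpq p q) z w := fun h => hnd (detects_mono (le_of_lt hzm) h)
      obtain ⟨ih1, ih2⟩ := ih z w hzc hDz
      -- key case disjunction: a gap-fit at position z - p would detect w
      have hkey : z < p ∨ m ≤ z + q ∨ ∃ z', z' < z ∧ z ≤ z' + p ∧ w z' = false := by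
        by_contra hc
        push_neg at hc
        obtain ⟨hpz, hmq, hno⟩ := hc
        apply hnd
        refine ⟨z - p, matches_of p q m w (z-p) (by omega) ?_ ?_⟩
        · intro j hj1 hj2
          have hne : w j ≠ false := hno j (by omega) (by omega)
          simpa using hne
        · intro j hj1 hj2
          exact hmax j (by omega) (by omega)
      -- plain fit after z would detect w
      have hg : m ≤ z + p + q + 1 := by
        by_contra hc
        push_neg at hc
        apply hnd
        refine ⟨z + 1, matches_of p q m w (z+1) (by omega) ?_ ?_⟩
        · intro j hj1 hj2
          exact hmax j (by omega) (by omega)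
        · intro j hj1 hj2
          exact hmax j (by omega) (by omega)
      constructor
      · rcases hkey with h | h | ⟨z', hz1, hz2, hz3⟩
        · omega
        · omega
        · have := ih2 z' hz1 hz3 hz2
          omega
      · intro z0 hz0m hz0f hz0p
        have hz0z : z0 ≤ z :=
          S.le_max' z0 (Finset.mem_filter.mpr ⟨Finset.mem_range.mpr hz0m, hz0f⟩)
        have hmzp : m ≤ z + p := by omega
        rcases hkey with h | h | ⟨z', hz1, hz2, hz3⟩
        · omega
        · omega
        · have := ih2 z' hz1 hz3 hz2
          omega

/-- The count of zeros of the extremal word. -/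
lemma zeros_w0 (p q k : ℕ) (hp : 1 ≤ p) :
    zerosIn ((k+1)*p+q) (fun j => decide (¬ (j % p = p - 1 ∧ j < k * p))) = k := by
  have himg : (Finset.range ((k+1)*p+q)).filter
      (fun j => (decide (¬ (j % p = p - 1 ∧ j < k * p)) : Bool) = false)
      = (Finset.range k).image (fun i => i * p + (p - 1)) := by
    ext j
    simp only [Finset.mem_filter, Finset.mem_range, Finset.mem_image,
      decide_eq_false_iff_not, not_not]
    constructor
    · rintro ⟨hjm, hmod, hjk⟩
      refine ⟨j / p, (Nat.div_lt_iff_lt_mul (by omega)).2 hjk, ?_⟩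
      have hd := Nat.div_add_mod' j p
      rw [hmod] at hd
      exact hd
    · rintro ⟨i, hik, rfl⟩
      have hmod : (i * p + (p - 1)) % p = p - 1 := by
        rw [Nat.mul_comm, Nat.mul_add_mod]
        exact Nat.mod_eq_of_lt (by omega)
      have h2 : (i + 1) * p ≤ k * p := Nat.mul_le_mul_right p (by omega)
      have h3 : (i + 1) * p = i * p + p := by ring
      have h4 : k * p ≤ (k+1) * p := Nat.mul_le_mul_right p (by omega)
      exact ⟨by omega, hmod, by omega⟩
  rw [zerosIn, himg, Finset.card_image_of_injective _ ?_, Finset.card_range]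
  intro a b hab
  simp only at hab
  have : a * p = b * p := by omega
  exact Nat.eq_of_mul_eq_mul_right (by omega) this

/-- The extremal word is not detected. -/
lemma not_detects_w0 (p q k : ℕ) (hq : 1 ≤ q) (hp : 2*q+1 ≤ p) :
    ¬ Detects (Qpq p q) ((k+1)*p+q) (fun j => decide (¬ (j % p = p - 1 ∧ j < k * p))) := by
  rintro ⟨i, hi⟩
  have hpq : p + q ∈ Qpq p q := by
    rw [Qpq, Finset.mem_union, Finset.mem_Icc]
    right; omega
  have h1 := hi (p+q) hpq
  have ekp : (k+1)*p = k*p + p := by ring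
  have hik : i < k * p := by
    have := h1.1
    omega
  have hr : i % p < p := Nat.mod_lt _ (by omega)
  obtain ⟨d, hd⟩ : ∃ d, i = p * d + i % p := ⟨i / p, (Nat.div_add_mod i p).symm⟩
  have hjQ : p - 1 - i % p ∈ Qpq p q := by
    rw [Qpq, Finset.mem_union, Finset.mem_range]
    left; omega
  have h2 := hi (p - 1 - i % p) hjQ
  have hie : i + (p - 1 - i % p) = p * d + (p - 1) := by omega
  have hmod : (i + (p - 1 - i % p)) % p = p - 1 := by
    rw [hie, Nat.mul_add_mod]
    exact Nat.mod_eq_of_lt (by omega)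
  have hdk : d < k := by
    have h6 : p * d < p * k := by
      have : p * d ≤ i := by omega
      have hkp : k * p = p * k := Nat.mul_comm k p
      omega
    exact lt_of_mul_lt_mul_left h6 (Nat.zero_le p)
  have hlt : i + (p - 1 - i % p) < k * p := by
    have h7 : p * (d + 1) ≤ p * k := Nat.mul_le_mul_left p (by omega)
    have h8 : p * (d + 1) = p * d + p := by ring
    have hkp : k * p = p * k := Nat.mul_comm k p
    omega
  have hfalse : (fun j => decide (¬ (j % p = p - 1 ∧ j < k * p))) (i + (p - 1 - i % p)) = false := by
    simp only [decide_eq_false_iff_not, not_not]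
    exact ⟨hmod, hlt⟩
  have htrue := h2.2
  rw [hfalse] at htrue
  exact Bool.false_ne_true htrue

/-- for `p ≥ 2q+1`, `q ≥ 1`, `k ≥ 1`, the longest word with exactly
`k` zeros not detected by `#^p - #^q` is `(1^{p-1} 0)^k 1^{p+q}` of length
`(k+1)p + q`; hence the seed solves the `(m,k)`-problem iff `m ≥ (k+1)p+q+1`. -/
theorem stmt4 (p q k : ℕ) (hq : 1 ≤ q) (hp : 2*q+1 ≤ p) (hk : 1 ≤ k) :
    (zerosIn ((k+1)*p+q) (fun j => decide (¬ (j % p = p - 1 ∧ j < k * p))) = k ∧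
      ¬ Detects (Qpq p q) ((k+1)*p+q) (fun j => decide (¬ (j % p = p - 1 ∧ j < k * p)))) ∧
    (∀ m : ℕ, ∀ w : ℕ → Bool, zerosIn m w = k → ¬ Detects (Qpq p q) m w → m ≤ (k+1)*p+q) ∧
    (∀ m : ℕ, Solves (Qpq p q) m k ↔ (k+1)*p+q+1 ≤ m) := by
  have hz := zeros_w0 p q k (by omega)
  have hnd := not_detects_w0 p q k hq hp
  refine ⟨⟨hz, hnd⟩, ?_, ?_⟩
  · intro m w hw hnd'
    exact (main_bound p q hq hp k m w (le_of_eq hw) hnd').1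
  · intro m
    constructor
    · intro hs
      by_contra hc
      push_neg at hc
      have hm : m ≤ (k+1)*p + q := Nat.lt_succ_iff.mp hc
      have h1 : zerosIn m (fun j => decide (¬ (j % p = p - 1 ∧ j < k * p))) ≤ k := by
        have := zerosIn_mono (fun j => decide (¬ (j % p = p - 1 ∧ j < k * p))) hm
        omega
      exact hnd (detects_mono hm (hs _ h1))
    · intro hm w hw
      by_contra hnd'
      have := (main_bound p q hq hp k m w hw hnd').1
      omega
end

section
/- Let Q = #^p - #^q with q ≤ p ≤ 2q+1, p,q ≥ 1, and k ≥ 2. The maximal length L(k) of a binary word with exactly k zeros not detected by Q satisfies: L(k) = (ℓ+1)p + (k+1)q + ℓ if k = 2ℓ, and L(k) = (ℓ+2)p + kq + ℓ if k = 2ℓ+1, witnessed by the words (1^{p+q} 0 1^{q-1} 0)^ℓ 1^{p+q} and 1^{p-1} 0 (1^{p+q} 0 1^{q-1} 0)^ℓ 1^{p+q} respectively. -/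
namespace Stmt5Aux


/-- the bound function -/
def B (p q k : ℕ) : ℕ := (k/2)*(p+2*q+1) + p + q + (k%2)*p

lemma B_zero (p q : ℕ) : B p q 0 = p + q := by simp [B]

lemma B_one (p q : ℕ) : B p q 1 = 2*p + q := by
  have h1 : (1:ℕ)/2 = 0 := by norm_num
  have h2 : (1:ℕ)%2 = 1 := by norm_num
  simp [B, h1, h2]; ring

lemma B_step (p q k : ℕ) (hp : p ≤ 2*q+1) : B p q k + p ≤ B p q (k+1) := by
  obtain ⟨t, rfl | rfl⟩ := Nat.even_or_odd' k
  · have h1 : 2*t/2 = t := by omega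
    have h2 : (2*t+1)/2 = t := by omega
    have h3 : (2*t)%2 = 0 := by omega
    have h4 : (2*t+1)%2 = 1 := by omega
    simp only [B, h1, h2, h3, h4]
    generalize t*(p+2*q+1) = c
    omega
  · have h1 : (2*t+1)/2 = t := by omega
    have h2 : (2*t+1+1)/2 = t+1 := by omega
    have h3 : (2*t+1)%2 = 1 := by omega
    have h4 : (2*t+1+1)%2 = 0 := by omega
    simp only [B, h1, h2, h3, h4]
    have e : (t+1)*(p+2*q+1) = t*(p+2*q+1) + (p+2*q+1) := by ring
    rw [e]
    generalize t*(p+2*q+1) = c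
    omega

lemma B_mono (p q : ℕ) (hp1 : 1 ≤ p) (hp : p ≤ 2*q+1) : Monotone (B p q) := by
  apply monotone_nat_of_le_succ
  intro k
  have := B_step p q k hp
  omega

lemma B_two (p q k : ℕ) : B p q (k+2) = B p q k + (p+2*q+1) := by
  have h1 : (k+2)/2 = k/2 + 1 := by omega
  have h2 : (k+2)%2 = k%2 := by omega
  simp only [B, h1, h2]
  have e : (k/2+1)*(p+2*q+1) = (k/2)*(p+2*q+1) + (p+2*q+1) := by ring
  rw [e]
  generalize (k/2)*(p+2*q+1) = c
  generalize (k%2)*p = d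
  omega

lemma B_add_r (p q : ℕ) (hp : p ≤ 2*q+1) (n r : ℕ) : B p q n + r*p ≤ B p q (n+r) := by
  induction r with
  | zero => simp
  | succ r ih =>
    have h1 := B_step p q (n+r) hp
    have e : (r+1)*p = r*p + p := by ring
    rw [e, show n + (r+1) = (n+r)+1 from by ring]
    omega

lemma arith1 (p q : ℕ) (hq : 1 ≤ q) (hqp : q ≤ p) (hp : p ≤ 2*q+1) :
    ∀ k, 1 ≤ k → (k+1)*p + q ≤ B p q k := by
  intro k
  induction k with
  | zero => omega
  | succ k ih =>
    intro _
    rcases Nat.eq_zero_or_pos k with rfl | hk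
    · have h1 : (0:ℕ)+1 = 1 := rfl
      rw [h1, B_one]
    · have h1 := ih hk
      have h2 := B_step p q k hp
      have e : (k+1+1)*p = (k+1)*p + p := by ring
      omega

lemma B_even (p q ℓ : ℕ) : B p q (2*ℓ) = ℓ*(p+2*q+1)+p+q := by
  have h1 : (2*ℓ)/2 = ℓ := by omega
  have h2 : (2*ℓ)%2 = 0 := by omega
  simp [B, h1, h2]

lemma B_odd (p q ℓ : ℕ) : B p q (2*ℓ+1) = ℓ*(p+2*q+1)+2*p+q := by
  have h1 : (2*ℓ+1)/2 = ℓ := by omega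
  have h2 : (2*ℓ+1)%2 = 1 := by omega
  simp only [B, h1, h2]
  generalize ℓ*(p+2*q+1) = c
  omega

/- zero counting lemmas -/

lemma zerosIn_succ (w : ℕ → Bool) (a : ℕ) :
    zerosIn (a+1) w = zerosIn a w + (if w a = false then 1 else 0) := by
  unfold zerosIn
  rw [Finset.range_add_one, Finset.filter_insert]
  split
  · rw [Finset.card_insert_of_notMem (by simp)]
  · simp

lemma zerosIn_of_all_true {w : ℕ → Bool} {a b : ℕ} (hab : a ≤ b)
    (h : ∀ t, a ≤ t → t < b → w t = true) : zerosIn b w = zerosIn a w := by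
  unfold zerosIn
  congr 1
  ext j
  simp only [Finset.mem_filter, Finset.mem_range]
  constructor
  · rintro ⟨hj, hw⟩
    refine ⟨?_, hw⟩
    by_contra hja
    push_neg at hja
    rw [h j hja hj] at hw
    exact Bool.noConfusion hw
  · rintro ⟨hj, hw⟩
    exact ⟨lt_of_lt_of_le hj hab, hw⟩

lemma zerosIn_eq_zero_all {w : ℕ → Bool} {x : ℕ} (h : zerosIn x w = 0) :
    ∀ t, t < x → w t = true := by
  intro t ht
  by_contra hw
  have hw' : w t = false := by
    cases hwt : w t
    · rfl
    · exact absurd hwt hw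
  have : t ∈ (Finset.range x).filter (fun j => w j = false) := by
    simp [Finset.mem_filter, Finset.mem_range, ht, hw']
  rw [Finset.card_eq_zero.mp h] at this
  exact absurd this (Finset.notMem_empty t)

lemma exists_max_zero {w : ℕ → Bool} {m : ℕ} (h : 0 < zerosIn m w) :
    ∃ x, x < m ∧ w x = false ∧ ∀ t, x < t → t < m → w t = true := by
  have hne : ((Finset.range m).filter (fun j => w j = false)).Nonempty := Finset.card_pos.mp h
  have hmem := Finset.max'_mem _ hne
  simp only [Finset.mem_filter, Finset.mem_range] at hmem
  refine ⟨_, hmem.1, hmem.2, ?_⟩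
  intro t hlt htm
  by_contra hw
  have hw' : w t = false := by
    cases hwt : w t
    · rfl
    · exact absurd hwt hw
  have hmem2 : t ∈ (Finset.range m).filter (fun j => w j = false) := by
    simp [Finset.mem_filter, Finset.mem_range, htm, hw']
  have := Finset.le_max' _ t hmem2
  omega

lemma exists_prev_zero {w : ℕ → Bool} {x : ℕ} (h : 0 < zerosIn x w) :
    ∃ y, y < x ∧ w y = false ∧ (∀ t, y < t → t < x → w t = true) ∧
      zerosIn x w = zerosIn y w + 1 := by
  obtain ⟨y, hyx, hy0, hybet⟩ := exists_max_zero h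
  refine ⟨y, hyx, hy0, hybet, ?_⟩
  have h1 : zerosIn x w = zerosIn (y+1) w :=
    zerosIn_of_all_true (by omega) (fun t h1 h2 => hybet t (by omega) h2)
  rw [h1, zerosIn_succ, hy0]
  simp

lemma zero_pos_of_mem {w : ℕ → Bool} {x u : ℕ} (hu : u < x) (hw : w u = false) :
    0 < zerosIn x w := by
  unfold zerosIn
  apply Finset.card_pos.mpr
  exact ⟨u, by simp [Finset.mem_filter, Finset.mem_range, hu, hw]⟩

/- detection lemmas -/

lemma detects_mono {Q : Finset ℕ} {m m' : ℕ} {w : ℕ → Bool} (h : m' ≤ m) :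
    Detects Q m' w → Detects Q m w := by
  rintro ⟨i, hi⟩
  exact ⟨i, fun s hs => ⟨lt_of_lt_of_le (hi s hs).1 h, (hi s hs).2⟩⟩

lemma mem_Qpq {p q s : ℕ} : s ∈ Qpq p q ↔ s < p ∨ (p+1 ≤ s ∧ s ≤ p+q) := by
  simp [Qpq, Finset.mem_union, Finset.mem_range, Finset.mem_Icc]

lemma blocked {p q m : ℕ} {w : ℕ → Bool} (hU : ¬ Detects (Qpq p q) m w) :
    ∀ i, i + (p+q) < m → ∃ s, (s < p ∨ (p+1 ≤ s ∧ s ≤ p+q)) ∧ w (i+s) = false := by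
  intro i hi
  by_contra h
  push_neg at h
  apply hU
  refine ⟨i, fun s hs => ?_⟩
  have hs' : s < p ∨ (p+1 ≤ s ∧ s ≤ p+q) := mem_Qpq.mp hs
  refine ⟨by omega, ?_⟩
  have h2 := h s hs'
  cases hws : w (i+s)
  · exact absurd hws h2
  · rfl

/-- The main upper bound. -/
lemma main_bound {p q : ℕ} (hq : 1 ≤ q) (hqp : q ≤ p) (hp : p ≤ 2*q+1) :
    ∀ k m (w : ℕ → Bool), ¬ Detects (Qpq p q) m w → zerosIn m w = k → m ≤ B p q k := by
  have hp1 : 1 ≤ p := le_trans hq hqp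
  intro k
  induction k using Nat.strong_induction_on with
  | _ k IH =>
  intro m w hU hk
  rcases Nat.eq_zero_or_pos k with rfl | hk1
  · by_contra hm
    push_neg at hm
    rw [B_zero] at hm
    obtain ⟨s, hs, hws⟩ := blocked hU 0 (by omega)
    have := zerosIn_eq_zero_all hk (0+s) (by omega)
    rw [this] at hws
    exact Bool.noConfusion hws
  · have hpos : 0 < zerosIn m w := by omega
    obtain ⟨x, hxm, hx0, hxmax⟩ := exists_max_zero hpos
    have htail : m ≤ x + (p+q+1) := by
      by_contra hmt
      push_neg at hmt
      obtain ⟨s, hs, hws⟩ := blocked hU (x+1) (by omega)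
      have := hxmax (x+1+s) (by omega) (by omega)
      rw [this] at hws
      exact Bool.noConfusion hws
    have CASC : ∀ x', x' < m → w x' = false →
        (∀ t, x' < t → t ≤ x' + q → t < m → w t = true) →
        ∀ r, zerosIn m w = zerosIn (x'+1) w + r → m ≤ x' + r*p + (p+q+1) →
        m ≤ B p q k := by
      intro x'
      induction x' using Nat.strong_induction_on with
      | _ x ih =>
      intro hxm' hx0' hgap r hr hinv
      have hx1 : zerosIn (x+1) w = zerosIn x w + 1 := by
        rw [zerosIn_succ, hx0']; simp
      by_cases hxp : x < p
      · -- case A : word starts too close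
        have hrk : r + 2 ≤ k + 1 := by omega
        have ha : (r+2)*p ≤ (k+1)*p := Nat.mul_le_mul_right p hrk
        have hbk := arith1 p q hq hqp hp k hk1
        have e1 : (r+2)*p = r*p + 2*p := by ring
        rw [e1] at ha
        linarith [hinv]
      · push_neg at hxp
        by_cases hmq : m ≤ x + q
        · -- case B
          rcases Nat.eq_zero_or_pos (zerosIn x w) with h0 | h0
          · by_cases hpq : m ≤ p + q
            · calc m ≤ p + q := hpq
                _ = B p q 0 := (B_zero p q).symm
                _ ≤ B p q k := B_mono p q hp1 hp (Nat.zero_le k)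
            · push_neg at hpq
              obtain ⟨s, hs, hws⟩ := blocked hU 0 (by omega)
              have hsx : x ≤ 0 + s := by
                by_contra hh
                push_neg at hh
                have := zerosIn_eq_zero_all h0 (0+s) hh
                rw [this] at hws
                exact Bool.noConfusion hws
              have hB1 : B p q 1 = 2*p + q := B_one p q
              have hm1 : B p q 1 ≤ B p q k := B_mono p q hp1 hp hk1
              omega
          · obtain ⟨y, hyx, hy0, hybet, hyc⟩ := exists_prev_zero h0
            have hgapxy : x ≤ y + (p+q+1) := by
              by_contra hg
              push_neg at hg
              obtain ⟨s, hs, hws⟩ := blocked hU (y+1) (by omega)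
              have := hybet (y+1+s) (by omega) (by omega)
              rw [this] at hws
              exact Bool.noConfusion hws
            have hUy : ¬ Detects (Qpq p q) y w := fun h => hU (detects_mono (by omega) h)
            have hyB := IH (zerosIn y w) (by omega) y w hUy rfl
            have hB2 := B_two p q (zerosIn y w)
            have hmono : B p q (zerosIn y w + 2) ≤ B p q k := B_mono p q hp1 hp (by omega)
            omega
        · -- case C
          push_neg at hmq
          obtain ⟨s, hs, hws⟩ := blocked hU (x - p) (by omega)
          rcases hs with hsp | hsq
          · have hupos : x - p + s < x := by omega
            have hzx : 0 < zerosIn x w := zero_pos_of_mem hupos hws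
            obtain ⟨y, hyx, hy0, hybet, hyc⟩ := exists_prev_zero hzx
            have hyu : x - p + s ≤ y := by
              by_contra hh
              push_neg at hh
              have := hybet _ hh hupos
              rw [this] at hws
              exact Bool.noConfusion hws
            have hxyp : x ≤ y + p := by omega
            by_cases hgq : x ≤ y + q
            · -- STOP case
              have hUy : ¬ Detects (Qpq p q) y w := fun h => hU (detects_mono (by omega) h)
              have hyB := IH (zerosIn y w) (by omega) y w hUy rfl
              have hBr := B_add_r p q hp (zerosIn y w + 2) r
              have hB2 := B_two p q (zerosIn y w)
              have hkk : zerosIn y w + 2 + r = k := by omega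
              rw [← hkk]
              linarith [hinv]
            · push_neg at hgq
              have hxy1 : zerosIn x w = zerosIn (y+1) w :=
                zerosIn_of_all_true (by omega) (fun t h1 h2 => hybet t (by omega) h2)
              refine ih y hyx (by omega) hy0 ?_ (r+1) (by omega) ?_
              · intro t h1 h2 h3
                exact hybet t h1 (by omega)
              · have e : (r+1)*p = r*p + p := by ring
                rw [e]
                linarith [hinv]
          · have ht : x - p + s = x + (s - p) := by omega
            have := hgap (x + (s-p)) (by omega) (by omega) (by omega)
            rw [ht, this] at hws
            exact Bool.noConfusion hws
    apply CASC x hxm hx0 (fun t h1 _ h3 => hxmax t h1 h3) 0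
    · have : zerosIn m w = zerosIn (x+1) w :=
        zerosIn_of_all_true (by omega) (fun t h1 h2 => hxmax t (by omega) h2)
      omega
    · simpa using htail




/-- enumeration of the zeros of the even witness -/
def iota (p q n : ℕ) : ℕ := (n/2)*(p+2*q+1)+p+q+(n%2)*q

lemma iota_even (p q t : ℕ) : iota p q (2*t) = t*(p+2*q+1)+p+q := by
  have h1 : (2*t)/2 = t := by omega
  have h2 : (2*t)%2 = 0 := by omega
  simp [iota, h1, h2]

lemma iota_odd (p q t : ℕ) : iota p q (2*t+1) = t*(p+2*q+1)+p+2*q := by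
  have h1 : (2*t+1)/2 = t := by omega
  have h2 : (2*t+1)%2 = 1 := by omega
  simp only [iota, h1, h2, one_mul]
  ring

lemma iota_sm (p q : ℕ) (hq : 1 ≤ q) : StrictMono (iota p q) := by
  apply strictMono_nat_of_lt_succ
  intro n
  obtain ⟨t, rfl | rfl⟩ := Nat.even_or_odd' n
  · rw [iota_even, iota_odd]
    omega
  · rw [iota_odd, show 2*t+1+1 = 2*(t+1) from by ring, iota_even]
    have e : (t+1)*(p+2*q+1) = t*(p+2*q+1)+(p+2*q+1) := by ring
    rw [e]
    generalize t*(p+2*q+1) = c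
    omega

lemma iota_lt (p q ℓ n : ℕ) (hn : n < 2*ℓ) : iota p q n < ℓ*(p+2*q+1)+p+q := by
  obtain ⟨t, rfl | rfl⟩ := Nat.even_or_odd' n
  · rw [iota_even]
    have h1 : t+1 ≤ ℓ := by omega
    have h2 : (t+1)*(p+2*q+1) ≤ ℓ*(p+2*q+1) := Nat.mul_le_mul_right _ h1
    have e : (t+1)*(p+2*q+1) = t*(p+2*q+1)+(p+2*q+1) := by ring
    rw [e] at h2
    omega
  · rw [iota_odd]
    have h1 : t+1 ≤ ℓ := by omega
    have h2 : (t+1)*(p+2*q+1) ≤ ℓ*(p+2*q+1) := Nat.mul_le_mul_right _ h1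
    have e : (t+1)*(p+2*q+1) = t*(p+2*q+1)+(p+2*q+1) := by ring
    rw [e] at h2
    omega

/-- zero count of the even witness -/
lemma even_count (p q ℓ : ℕ) (hq : 1 ≤ q) :
    zerosIn ((ℓ+1)*p+(2*ℓ+1)*q+ℓ)
      (fun j => decide (¬ ∃ t, t < ℓ ∧ (j = t*(p+2*q+1)+p+q ∨ j = t*(p+2*q+1)+p+2*q))) = 2*ℓ := by
  have hM : (ℓ+1)*p+(2*ℓ+1)*q+ℓ = ℓ*(p+2*q+1)+p+q := by ring
  unfold zerosIn
  have hset : (Finset.range ((ℓ+1)*p+(2*ℓ+1)*q+ℓ)).filter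
      (fun j => (fun j => decide (¬ ∃ t, t < ℓ ∧ (j = t*(p+2*q+1)+p+q ∨ j = t*(p+2*q+1)+p+2*q))) j = false)
      = (Finset.range (2*ℓ)).image (iota p q) := by
    ext j
    simp only [Finset.mem_filter, Finset.mem_range, Finset.mem_image,
      decide_eq_false_iff_not, not_not]
    constructor
    · rintro ⟨hjM, t, ht, hj | hj⟩
      · exact ⟨2*t, by omega, by rw [iota_even]; omega⟩
      · exact ⟨2*t+1, by omega, by rw [iota_odd]; omega⟩
    · rintro ⟨n, hn, rfl⟩
      refine ⟨by rw [hM]; exact iota_lt p q ℓ n hn, ?_⟩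
      obtain ⟨t, rfl | rfl⟩ := Nat.even_or_odd' n
      · exact ⟨t, by omega, Or.inl (iota_even p q t)⟩
      · exact ⟨t, by omega, Or.inr (iota_odd p q t)⟩
  rw [hset, Finset.card_image_of_injective _ (iota_sm p q hq).injective, Finset.card_range]

/-- zero count of the odd witness -/
lemma odd_count (p q ℓ : ℕ) (hq : 1 ≤ q) (hqp : q ≤ p) :
    zerosIn ((ℓ+2)*p+(2*ℓ+1)*q+ℓ)
      (fun j => decide (¬ (j = p - 1 ∨
        ∃ t, t < ℓ ∧ (j = p+t*(p+2*q+1)+p+q ∨ j = p+t*(p+2*q+1)+p+2*q)))) = 2*ℓ+1 := by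
  have hp1 : 1 ≤ p := le_trans hq hqp
  have hM : (ℓ+2)*p+(2*ℓ+1)*q+ℓ = p + (ℓ*(p+2*q+1)+p+q) := by ring
  unfold zerosIn
  have hset : (Finset.range ((ℓ+2)*p+(2*ℓ+1)*q+ℓ)).filter
      (fun j => (fun j => decide (¬ (j = p - 1 ∨
        ∃ t, t < ℓ ∧ (j = p+t*(p+2*q+1)+p+q ∨ j = p+t*(p+2*q+1)+p+2*q)))) j = false)
      = insert (p-1) ((Finset.range (2*ℓ)).image (fun n => p + iota p q n)) := by
    ext j
    simp only [Finset.mem_filter, Finset.mem_range, Finset.mem_insert, Finset.mem_image,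
      decide_eq_false_iff_not, not_not]
    constructor
    · rintro ⟨hjM, hj | ⟨t, ht, hj | hj⟩⟩
      · exact Or.inl hj
      · refine Or.inr ⟨2*t, by omega, ?_⟩
        rw [iota_even]; omega
      · refine Or.inr ⟨2*t+1, by omega, ?_⟩
        rw [iota_odd]; omega
    · rintro (rfl | ⟨n, hn, rfl⟩)
      · exact ⟨by omega, Or.inl rfl⟩
      · refine ⟨by rw [hM]; have := iota_lt p q ℓ n hn; omega, Or.inr ?_⟩
        obtain ⟨t, rfl | rfl⟩ := Nat.even_or_odd' n
        · exact ⟨t, by omega, Or.inl (by rw [iota_even]; omega)⟩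
        · exact ⟨t, by omega, Or.inr (by rw [iota_odd]; omega)⟩
  rw [hset]
  rw [Finset.card_insert_of_notMem]
  · rw [Finset.card_image_of_injective _
      (fun a b hab => (iota_sm p q hq).injective (by omega : iota p q a = iota p q b)),
      Finset.card_range]
  · simp only [Finset.mem_image, Finset.mem_range, not_exists]
    intro n _
    have : p + q ≤ iota p q n := by
      unfold iota; omega
    omega

/-- non-detection of the even witness -/
lemma even_undet (p q ℓ : ℕ) (hq : 1 ≤ q) (hqp : q ≤ p) :
    ¬ Detects (Qpq p q) ((ℓ+1)*p+(2*ℓ+1)*q+ℓ)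
      (fun j => decide (¬ ∃ t, t < ℓ ∧ (j = t*(p+2*q+1)+p+q ∨ j = t*(p+2*q+1)+p+2*q))) := by
  have hp1 : 1 ≤ p := le_trans hq hqp
  rintro ⟨i, hmatch⟩
  have hpq : p+q ∈ Qpq p q := mem_Qpq.mpr (Or.inr ⟨by omega, le_refl _⟩)
  have hiM := (hmatch (p+q) hpq).1
  have hM : (ℓ+1)*p+(2*ℓ+1)*q+ℓ = ℓ*(p+2*q+1)+p+q := by ring
  rw [hM] at hiM
  have hiP : i < ℓ*(p+2*q+1) := by omega
  have hP1 : 0 < p+2*q+1 := by omega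
  set t := i / (p+2*q+1) with hT
  have htl : t < ℓ := by
    rw [hT]
    rw [Nat.div_lt_iff_lt_mul hP1]
    omega
  have hto : t*(p+2*q+1) + i % (p+2*q+1) = i := Nat.div_add_mod' i (p+2*q+1)
  set o := i % (p+2*q+1) with hO
  have ho : o < p+2*q+1 := Nat.mod_lt _ hP1
  have key : ∀ s, s ∈ Qpq p q →
      (i + s = t*(p+2*q+1)+p+q ∨ i + s = t*(p+2*q+1)+p+2*q) → False := by
    intro s hs he
    have h2 := (hmatch s hs).2
    have h3 := of_decide_eq_true h2
    exact h3 ⟨t, htl, he⟩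
  rcases lt_or_ge o q with h | h
  · exact key (p+q-o) (mem_Qpq.mpr (Or.inr ⟨by omega, by omega⟩)) (Or.inl (by omega))
  · rcases lt_or_ge o (2*q) with h2 | h2
    · exact key (p+2*q-o) (mem_Qpq.mpr (Or.inr ⟨by omega, by omega⟩)) (Or.inr (by omega))
    · rcases eq_or_lt_of_le h2 with h3 | h3
      · exact key (p-q) (mem_Qpq.mpr (Or.inl (by omega))) (Or.inl (by omega))
      · exact key (p+2*q-o) (mem_Qpq.mpr (Or.inl (by omega))) (Or.inr (by omega))

/-- non-detection of the odd witness -/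
lemma odd_undet (p q ℓ : ℕ) (hq : 1 ≤ q) (hqp : q ≤ p) :
    ¬ Detects (Qpq p q) ((ℓ+2)*p+(2*ℓ+1)*q+ℓ)
      (fun j => decide (¬ (j = p - 1 ∨
        ∃ t, t < ℓ ∧ (j = p+t*(p+2*q+1)+p+q ∨ j = p+t*(p+2*q+1)+p+2*q)))) := by
  have hp1 : 1 ≤ p := le_trans hq hqp
  rintro ⟨i, hmatch⟩
  have hpq : p+q ∈ Qpq p q := mem_Qpq.mpr (Or.inr ⟨by omega, le_refl _⟩)
  have hiM := (hmatch (p+q) hpq).1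
  have hM : (ℓ+2)*p+(2*ℓ+1)*q+ℓ = p + (ℓ*(p+2*q+1)+p+q) := by ring
  rw [hM] at hiM
  have key : ∀ s, s ∈ Qpq p q →
      (i + s = p - 1 ∨
        ∃ t, t < ℓ ∧ (i + s = p+t*(p+2*q+1)+p+q ∨ i + s = p+t*(p+2*q+1)+p+2*q)) → False := by
    intro s hs he
    have h2 := (hmatch s hs).2
    have h3 := of_decide_eq_true h2
    exact h3 he
  rcases lt_or_ge i p with hip | hip
  · exact key (p-1-i) (mem_Qpq.mpr (Or.inl (by omega))) (Or.inl (by omega))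
  · have hiP : i - p < ℓ*(p+2*q+1) := by omega
    have hP1 : 0 < p+2*q+1 := by omega
    set t := (i-p) / (p+2*q+1) with hT
    have htl : t < ℓ := by
      rw [hT, Nat.div_lt_iff_lt_mul hP1]
      omega
    have hto : t*(p+2*q+1) + (i-p) % (p+2*q+1) = i - p := Nat.div_add_mod' (i-p) (p+2*q+1)
    set o := (i-p) % (p+2*q+1) with hO
    have ho : o < p+2*q+1 := Nat.mod_lt _ hP1
    rcases lt_or_ge o q with h | h
    · exact key (p+q-o) (mem_Qpq.mpr (Or.inr ⟨by omega, by omega⟩))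
        (Or.inr ⟨t, htl, Or.inl (by omega)⟩)
    · rcases lt_or_ge o (2*q) with h2 | h2
      · exact key (p+2*q-o) (mem_Qpq.mpr (Or.inr ⟨by omega, by omega⟩))
          (Or.inr ⟨t, htl, Or.inr (by omega)⟩)
      · rcases eq_or_lt_of_le h2 with h3 | h3
        · exact key (p-q) (mem_Qpq.mpr (Or.inl (by omega)))
            (Or.inr ⟨t, htl, Or.inl (by omega)⟩)
        · exact key (p+2*q-o) (mem_Qpq.mpr (Or.inl (by omega)))
            (Or.inr ⟨t, htl, Or.inr (by omega)⟩)


end Stmt5Aux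

/-- for `q ≤ p ≤ 2q+1`, `q ≥ 1` and `k ≥ 2`, the maximal length `L(k)` of a
word with exactly `k` zeros not detected by `#^p - #^q` is `(ℓ+1)p+(k+1)q+ℓ` for `k = 2ℓ`
and `(ℓ+2)p+kq+ℓ` for `k = 2ℓ+1`, witnessed by `(1^{p+q} 0 1^{q-1} 0)^ℓ 1^{p+q}` and
`1^{p-1} 0 (1^{p+q} 0 1^{q-1} 0)^ℓ 1^{p+q}` respectively. -/
theorem stmt5 (p q ℓ : ℕ) (hq : 1 ≤ q) (hqp : q ≤ p) (hp : p ≤ 2*q+1) (hℓ : 1 ≤ ℓ) :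
    -- even case : k = 2ℓ
    (zerosIn ((ℓ+1)*p+(2*ℓ+1)*q+ℓ)
        (fun j => decide (¬ ∃ t, t < ℓ ∧ (j = t*(p+2*q+1)+p+q ∨ j = t*(p+2*q+1)+p+2*q))) = 2*ℓ ∧
      ¬ Detects (Qpq p q) ((ℓ+1)*p+(2*ℓ+1)*q+ℓ)
        (fun j => decide (¬ ∃ t, t < ℓ ∧ (j = t*(p+2*q+1)+p+q ∨ j = t*(p+2*q+1)+p+2*q))) ∧
      ∀ m : ℕ, ∀ w : ℕ → Bool, zerosIn m w = 2*ℓ → ¬ Detects (Qpq p q) m w →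
        m ≤ (ℓ+1)*p+(2*ℓ+1)*q+ℓ) ∧
    -- odd case : k = 2ℓ+1
    (zerosIn ((ℓ+2)*p+(2*ℓ+1)*q+ℓ)
        (fun j => decide (¬ (j = p - 1 ∨
          ∃ t, t < ℓ ∧ (j = p+t*(p+2*q+1)+p+q ∨ j = p+t*(p+2*q+1)+p+2*q)))) = 2*ℓ+1 ∧
      ¬ Detects (Qpq p q) ((ℓ+2)*p+(2*ℓ+1)*q+ℓ)
        (fun j => decide (¬ (j = p - 1 ∨
          ∃ t, t < ℓ ∧ (j = p+t*(p+2*q+1)+p+q ∨ j = p+t*(p+2*q+1)+p+2*q)))) ∧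
      ∀ m : ℕ, ∀ w : ℕ → Bool, zerosIn m w = 2*ℓ+1 → ¬ Detects (Qpq p q) m w →
        m ≤ (ℓ+2)*p+(2*ℓ+1)*q+ℓ) := by
  
  refine ⟨⟨Stmt5Aux.even_count p q ℓ hq, Stmt5Aux.even_undet p q ℓ hq hqp, ?_⟩,
    Stmt5Aux.odd_count p q ℓ hq hqp, Stmt5Aux.odd_undet p q ℓ hq hqp, ?_⟩
  · intro m w hz hU
    have h := Stmt5Aux.main_bound hq hqp hp (2*ℓ) m w hU hz
    rw [Stmt5Aux.B_even] at h
    have e : (ℓ+1)*p+(2*ℓ+1)*q+ℓ = ℓ*(p+2*q+1)+p+q := by ring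
    rw [e]
    exact h
  · intro m w hz hU
    have h := Stmt5Aux.main_bound hq hqp hp (2*ℓ+1) m w hU hz
    rw [Stmt5Aux.B_odd] at h
    have e : (ℓ+2)*p+(2*ℓ+1)*q+ℓ = ℓ*(p+2*q+1)+2*p+q := by ring
    rw [e]
    exact h
end

section
/- If the i-regular expansion i⊗F of a seed family F solves the (i·m, k)-problem, then F solves the (m, ⌊k/i⌋)-problem. -/
/-- if the `i`-regular expansion of a family solves the `(i·m,k)`-problem,
then the family solves the `(m, ⌊k/i⌋)`-problem. -/
theorem stmt9 (F : Set (Finset ℕ)) (m k i : ℕ) (hi : 1 ≤ i)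
    (h : FSolves ((fun Q => Q.image (fun p => i * p)) '' F) (i * m) k) :
    FSolves F m (k / i) := by
  intro v hv
  have hipos : 0 < i := hi
  set w : ℕ → Bool := fun j => v (j / i) with hw
  have hset : (Finset.range (i*m)).filter (fun j => w j = false)
      = ((Finset.range m).filter (fun t => v t = false)).biUnion
          (fun t => Finset.Ico (i*t) (i*t+i)) := by
    ext j
    simp only [Finset.mem_filter, Finset.mem_range, Finset.mem_biUnion, Finset.mem_Ico, hw]
    constructor
    · rintro ⟨hj, hz⟩
      have h1 := Nat.div_add_mod j i
      have h2 := Nat.mod_lt j hipos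
      exact ⟨j / i, ⟨(Nat.div_lt_iff_lt_mul hipos).2 (by rw [Nat.mul_comm]; exact hj), hz⟩,
        by omega, by omega⟩
    · rintro ⟨t, ⟨ht, hz⟩, h1, h2⟩
      have hdiv : j / i = t := Nat.div_eq_of_lt_le (by rw [Nat.mul_comm]; exact h1)
        (by rw [Nat.succ_mul, Nat.mul_comm]; omega)
      exact ⟨by calc j < i*t+i := h2
                  _ ≤ i*m := by nlinarith, by rw [hdiv]; exact hz⟩
  have hcard : zerosIn (i*m) w ≤ k := by
    unfold zerosIn
    rw [hset, Finset.card_biUnion]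
    · have : ∀ t ∈ (Finset.range m).filter (fun t => v t = false),
          (Finset.Ico (i*t) (i*t+i)).card = i := by
        intro t _; rw [Nat.card_Ico]; omega
      rw [Finset.sum_congr rfl this, Finset.sum_const, smul_eq_mul]
      calc zerosIn m v * i ≤ (k/i) * i := Nat.mul_le_mul_right i hv
        _ ≤ k := Nat.div_mul_le_self k i
    · intro a _ b _ hab
      apply Finset.disjoint_left.2
      intro x hx hx'
      simp only [Finset.mem_Ico] at hx hx'
      rcases Nat.lt_or_ge a b with hlt | hge
      · have : i * (a+1) ≤ i * b := Nat.mul_le_mul_left i hlt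
        rw [Nat.mul_succ] at this; omega
      · have hlt : b < a := lt_of_le_of_ne hge (Ne.symm hab)
        have : i * (b+1) ≤ i * a := Nat.mul_le_mul_left i hlt
        rw [Nat.mul_succ] at this; omega
  obtain ⟨Q', ⟨R, hR, rfl⟩, a, ha⟩ := h w hcard
  refine ⟨R, hR, a / i, fun p hp => ?_⟩
  obtain ⟨h1, h2⟩ := ha (i*p) (Finset.mem_image_of_mem _ hp)
  have hdiv : (a + i * p) / i = a / i + p := Nat.add_mul_div_left a p hipos
  constructor
  · have := Nat.div_mul_le_self a i
    have : i * (a/i + p) ≤ a + i*p := by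
      have := Nat.div_mul_le_self a i
      calc i * (a/i+p) = a/i*i + i*p := by ring
        _ ≤ a + i*p := by omega
    nlinarith
  · have := h2
    simpa [hw, hdiv] using this
end

section
/- A seed Q solves the cyclic (m,k)-problem if and only if for every i ≥ 1, the seed Q_i = [Q, -^{m-s(Q)}]^i (the concatenation (Q · joker^{m-s(Q)})^i · Q, i.e. the union of translates Q + j·m for j = 0..i) solves the linear (m·(i+1) + s(Q) - 1, k)-problem. -/
/-- a seed `Q` (with `0 ∈ Q`, span `s ≤ m`) solves the cyclic
`(m,k)`-problem iff for every `i ≥ 1` the iterated seed `⋃_{j=0}^{i} (Q + j·m)`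
solves the linear `(m·(i+1) + s - 1, k)`-problem. -/
theorem stmt10 (Q : Finset ℕ) (h0 : 0 ∈ Q) (m k : ℕ)
    (hspan : ∀ p ∈ Q, p < m) :
    CSolves Q m k ↔
      ∀ i : ℕ, 1 ≤ i →
        Solves ((Finset.range (i + 1)).biUnion (fun j => Q.image (fun p => p + j * m)))
          (m * (i + 1) + (Q.max' ⟨0, h0⟩ + 1) - 1) k := by
  classical
  have hm : 0 < m := hspan 0 h0
  set b := Q.max' ⟨0, h0⟩ with hb
  have hbQ : b ∈ Q := Q.max'_mem _
  have hbm : b < m := hspan b hbQ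
  have hle : ∀ p ∈ Q, p ≤ b := fun p hp => Q.le_max' p hp
  constructor
  · -- forward
    intro hC i hi w hw
    have hMeq : m * (i + 1) + (b + 1) - 1 = m * (i + 1) + b := by omega
    rw [hMeq] at hw ⊢
    set M := m * (i + 1) + b with hMdef
    set v : ℕ → Bool :=
      (fun t => decide (∀ j < i + 2, t + j * m < M → w (t + j * m) = true)) with hv
    have hex : ∀ t, t < m → v t = false → ∃ x, x % m = t ∧ x < M ∧ w x = false := by
      intro t htm ht
      simp only [hv, decide_eq_false_iff_not] at ht
      push_neg at ht
      obtain ⟨j, hj, hjM, hjw⟩ := ht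
      refine ⟨t + j * m, ?_, hjM, by simpa using hjw⟩
      simp [Nat.add_mul_mod_self_right, Nat.mod_eq_of_lt htm]
    have hvz : zerosIn m v ≤ k := by
      refine le_trans ?_ hw
      unfold zerosIn
      apply Finset.card_le_card_of_injOn
        (fun t => if h : ∃ x, x % m = t ∧ x < M ∧ w x = false then Nat.find h else 0)
      · intro t ht
        simp only [Finset.mem_coe, Finset.mem_filter, Finset.mem_range] at ht ⊢
        have h := hex t ht.1 ht.2
        rw [dif_pos h]
        exact ⟨(Nat.find_spec h).2.1, (Nat.find_spec h).2.2⟩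
      · intro t1 ht1 t2 ht2 hft
        simp only [Finset.coe_filter, Set.mem_setOf_eq, Finset.mem_range] at ht1 ht2
        have h1 := hex t1 ht1.1 ht1.2
        have h2 := hex t2 ht2.1 ht2.2
        simp only [dif_pos h1, dif_pos h2] at hft
        have e1 := (Nat.find_spec h1).1
        have e2 := (Nat.find_spec h2).1
        rw [← e1, ← e2, hft]
    obtain ⟨j, hjm, hjv⟩ := hC v hvz
    refine ⟨j, ?_⟩
    intro q hq
    simp only [Finset.mem_biUnion, Finset.mem_range, Finset.mem_image] at hq
    obtain ⟨j', hj', p, hp, rfl⟩ := hq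
    have hpb : p ≤ b := hle p hp
    have hji : j' ≤ i := by omega
    have hmul : j' * m ≤ i * m := Nat.mul_le_mul_right m hji
    have hring : m * (i + 1) = i * m + m := by ring
    have hbound : j + (p + j' * m) < M := by omega
    refine ⟨hbound, ?_⟩
    have hvt : ∀ t, v t = true →
        ∀ j'' < i + 2, t + j'' * m < M → w (t + j'' * m) = true := by
      intro t ht
      simpa only [hv, decide_eq_true_eq] using ht
    have hjvp := hjv p hp
    by_cases hcase : j + p < m
    · rw [Nat.mod_eq_of_lt hcase] at hjvp
      have := hvt _ hjvp j' (by omega) (by omega)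
      have heq : j + p + j' * m = j + (p + j' * m) := by omega
      rwa [heq] at this
    · have hmod : (j + p) % m = j + p - m := by
        rw [Nat.mod_eq_sub_mod (by omega), Nat.mod_eq_of_lt (by omega)]
      rw [hmod] at hjvp
      have hring2 : (j' + 1) * m = j' * m + m := by ring
      have := hvt _ hjvp (j' + 1) (by omega) (by omega)
      have heq : j + p - m + (j' + 1) * m = j + (p + j' * m) := by omega
      rwa [heq] at this
  · -- converse
    intro H v hv
    have H1 := H 1 le_rfl
    set w : ℕ → Bool :=
      (fun x => if m ≤ x ∧ x < 2 * m then v (x - m) else true) with hwdef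
    have hwfalse : ∀ x, w x = false → m ≤ x ∧ x < 2 * m ∧ v (x - m) = false := by
      intro x hx
      by_cases hc : m ≤ x ∧ x < 2 * m
      · refine ⟨hc.1, hc.2, ?_⟩
        simpa only [hwdef, if_pos hc] using hx
      · simp only [hwdef, if_neg hc] at hx
        exact absurd hx (by simp)
    have hwz : zerosIn (m * (1 + 1) + (b + 1) - 1) w ≤ k := by
      refine le_trans ?_ hv
      unfold zerosIn
      apply Finset.card_le_card_of_injOn (fun x => x - m)
      · intro x hx
        simp only [Finset.mem_coe, Finset.mem_filter, Finset.mem_range] at hx ⊢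
        obtain ⟨h1, h2, h3⟩ := hwfalse x hx.2
        exact ⟨by omega, h3⟩
      · intro x1 hx1 x2 hx2 h
        simp only [Finset.coe_filter, Set.mem_setOf_eq, Finset.mem_range] at hx1 hx2
        have h1 := hwfalse x1 hx1.2
        have h2 := hwfalse x2 hx2.2
        simp only at h
        omega
    obtain ⟨j, hj⟩ := H1 w hwz
    have hmem : ∀ p ∈ Q, ∀ j' < 2, p + j' * m ∈
        (Finset.range (1 + 1)).biUnion (fun j => Q.image (fun p => p + j * m)) := by
      intro p hp j' hj'
      simp only [Finset.mem_biUnion, Finset.mem_range, Finset.mem_image]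
      exact ⟨j', by omega, p, hp, rfl⟩
    have hwin : ∀ x, m ≤ x → x < 2 * m → w x = true → v (x - m) = true := by
      intro x h1 h2 h3
      simpa only [hwdef, if_pos (And.intro h1 h2)] using h3
    have hjm : j < m := by
      have := (hj (b + 1 * m) (hmem b hbQ 1 (by omega))).1
      omega
    refine ⟨j, hjm, ?_⟩
    intro p hp
    have hpm : p < m := hspan p hp
    by_cases hcase : j + p < m
    · have h1 := (hj (p + 1 * m) (hmem p hp 1 (by omega))).2
      have heq : j + (p + 1 * m) = j + p + m := by omega
      rw [heq] at h1
      have := hwin (j + p + m) (by omega) (by omega) h1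
      rw [Nat.mod_eq_of_lt hcase]
      simpa using this
    · have h1 := (hj (p + 0 * m) (hmem p hp 0 (by omega))).2
      have heq : j + (p + 0 * m) = j + p := by omega
      rw [heq] at h1
      have := hwin (j + p) (by omega) (by omega) h1
      have hmod : (j + p) % m = j + p - m := by
        rw [Nat.mod_eq_sub_mod (by omega), Nat.mod_eq_of_lt (by omega)]
      rw [hmod]
      exact this
end

section
/- For every i ≥ 0, the seed ⋃_{j=0}^{i}({0,1,2,4} + 7j) (pattern [###-#, --]^i) solves the linear (11 + 7i, 2)-problem. -/
lemma subset_pair {Z : Finset ℕ} (h : Z.card ≤ 2) : ∃ a b, Z ⊆ {a, b} := by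
  interval_cases hc : Z.card
  · refine ⟨0, 0, ?_⟩
    rw [Finset.card_eq_zero] at hc
    simp [hc]
  · rw [Finset.card_eq_one] at hc
    obtain ⟨a, rfl⟩ := hc
    exact ⟨a, a, by simp⟩
  · rw [Finset.card_eq_two] at hc
    obtain ⟨a, b, -, rfl⟩ := hc
    exact ⟨a, b, le_refl _⟩

lemma cyc : ∀ r s : Fin 7, ∃ t : Fin 7,
    ((r : ℕ) + (7 - (t : ℕ))) % 7 ∈ ({3, 5, 6} : Finset ℕ) ∧
    ((s : ℕ) + (7 - (t : ℕ))) % 7 ∈ ({3, 5, 6} : Finset ℕ) := by decide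

/-- for every `i ≥ 0`, the seed `[###-#,--]^i = ⋃_{j=0}^{i} ({0,1,2,4} + 7j)`
solves the linear `(11 + 7i, 2)`-problem. -/
theorem stmt12 (i : ℕ) :
    Solves ((Finset.range (i + 1)).biUnion
        (fun j => ({0, 1, 2, 4} : Finset ℕ).image (fun p => p + 7 * j)))
      (11 + 7 * i) 2 := by
  intro w hw
  obtain ⟨a, b, hab⟩ := subset_pair hw
  have hz : ∀ j, j < 11 + 7 * i → w j = false → j = a ∨ j = b := by
    intro j hj hwj
    have : j ∈ ({a, b} : Finset ℕ) := hab (by simp [Finset.mem_filter, hj, hwj])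
    simpa using this
  obtain ⟨t, hta, htb⟩ := cyc ⟨a % 7, Nat.mod_lt _ (by norm_num)⟩ ⟨b % 7, Nat.mod_lt _ (by norm_num)⟩
  refine ⟨(t : ℕ), ?_⟩
  intro p hp
  simp only [Finset.mem_biUnion, Finset.mem_range, Finset.mem_image, Finset.mem_insert,
    Finset.mem_singleton] at hp
  obtain ⟨j, hj, p0, hp0, rfl⟩ := hp
  have ht7 : (t : ℕ) < 7 := t.isLt
  have hp04 : p0 ≤ 4 := by rcases hp0 with rfl | rfl | rfl | rfl <;> norm_num
  have hlt : (t : ℕ) + (p0 + 7 * j) < 11 + 7 * i := by omega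
  refine ⟨hlt, ?_⟩
  by_contra hfalse
  have hwz : w ((t : ℕ) + (p0 + 7 * j)) = false := by
    cases hval : w ((t : ℕ) + (p0 + 7 * j)) <;> simp_all
  have key : ∀ c : ℕ, (t : ℕ) + (p0 + 7 * j) = c →
      (c % 7 + (7 - (t : ℕ))) % 7 ∈ ({3, 5, 6} : Finset ℕ) → False := by
    intro c hc hmem
    have : (c % 7 + (7 - (t : ℕ))) % 7 = p0 % 7 := by
      subst hc
      conv_lhs => rw [Nat.mod_add_mod]
      have h1 : (t : ℕ) + (p0 + 7 * j) + (7 - (t : ℕ)) = p0 + 7 * (j + 1) := by omega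
      rw [h1, Nat.add_mul_mod_self_left]
    rw [this] at hmem
    have : p0 % 7 = p0 := Nat.mod_eq_of_lt (by omega)
    rw [this] at hmem
    rcases hp0 with rfl | rfl | rfl | rfl <;> simp_all
  rcases hz _ hlt hwz with hc | hc
  · exact key a hc hta
  · exact key b hc htb
end

section
/- If a seed Q of span m solves the cyclic (m,k)-problem, then the number n of jokers of Q (i.e. n = m - |Q|) satisfies C(m,k)/m ≤ C(n,k). Consequently, for fixed k, n = Ω(m^{(k-1)/k}). -/
lemma back_mod (m j s : ℕ) (hj : j ≤ m) (hs : s < m) :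
    (j + (s + (m - j)) % m) % m = s := by
  rw [Nat.add_mod_mod]
  have h : j + (s + (m - j)) = s + m := by omega
  rw [h, Nat.add_mod_right, Nat.mod_eq_of_lt hs]

lemma count_core (m k : ℕ) (Q : Finset ℕ) (hm : 0 < m) (hQ : Q ⊆ Finset.range m)
    (hdet : ∀ w : ℕ → Bool, zerosIn m w = k →
      ∃ j < m, ∀ p ∈ Q, w ((j + p) % m) = true) :
    Nat.choose m k ≤ m * Nat.choose (m - Q.card) k := by
  classical
  set J : Finset ℕ := Finset.range m \ Q with hJ
  set A : Finset (Finset ℕ) := (Finset.range m).powersetCard k with hA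
  have key : ∀ S ∈ A, ∃ j, j < m ∧ ∀ s ∈ S, (s + (m - j)) % m ∈ J := by
    intro S hS
    rw [hA, Finset.mem_powersetCard] at hS
    obtain ⟨hSsub, hScard⟩ := hS
    have hz : zerosIn m (fun x => decide (x ∉ S)) = k := by
      unfold zerosIn
      have hfe : (Finset.range m).filter (fun x => (decide (x ∉ S) : Bool) = false)
          = S := by
        ext x
        simp only [Finset.mem_filter, decide_eq_false_iff_not, not_not,
          Finset.mem_range]
        exact ⟨fun h => h.2, fun h => ⟨Finset.mem_range.mp (hSsub h), h⟩⟩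
      rw [hfe, hScard]
    obtain ⟨j, hj, hjw⟩ := hdet (fun x => decide (x ∉ S)) hz
    refine ⟨j, hj, fun s hs => ?_⟩
    have hsm : s < m := Finset.mem_range.mp (hSsub hs)
    rw [hJ, Finset.mem_sdiff]
    refine ⟨Finset.mem_range.mpr (Nat.mod_lt _ hm), ?_⟩
    intro hmem
    have h2 := hjw _ hmem
    rw [back_mod m j s (le_of_lt hj) hsm] at h2
    simp only [decide_eq_true_eq] at h2
    exact h2 hs
  choose! f hf1 hf2 using key
  have hinj : Set.InjOn (fun S => (f S, S.image (fun s => (s + (m - f S)) % m)))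
      (A : Set (Finset ℕ)) := by
    intro S1 h1 S2 h2 heq
    have h1' := h1; have h2' := h2
    rw [Finset.mem_coe, hA, Finset.mem_powersetCard] at h1' h2'
    simp only [Prod.mk.injEq] at heq
    obtain ⟨hjeq, hTeq⟩ := heq
    -- recovery
    have recov : ∀ (S : Finset ℕ), S ⊆ Finset.range m → S ∈ A →
        S = (S.image (fun s => (s + (m - f S)) % m)).image
            (fun t => (f S + t) % m) := by
      intro S hSsub hSA
      have hjm : f S ≤ m := le_of_lt (hf1 S hSA)
      apply Finset.eq_of_subset_of_card_le
      · intro s hs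
        have hsm : s < m := Finset.mem_range.mp (hSsub hs)
        rw [Finset.mem_image]
        exact ⟨(s + (m - f S)) % m, Finset.mem_image_of_mem _ hs,
          back_mod m (f S) s hjm hsm⟩
      · exact le_trans Finset.card_image_le Finset.card_image_le
    have e1 := recov S1 h1'.1 h1
    have e2 := recov S2 h2'.1 h2
    rw [e1, e2, hTeq, hjeq]
  have hmaps : ∀ S ∈ A, (f S, S.image (fun s => (s + (m - f S)) % m)) ∈
      Finset.range m ×ˢ J.powersetCard k := by
    intro S hS
    have hS' := hS
    rw [hA, Finset.mem_powersetCard] at hS'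
    obtain ⟨hSsub, hScard⟩ := hS'
    rw [Finset.mem_product]
    refine ⟨Finset.mem_range.mpr (hf1 S hS), Finset.mem_powersetCard.mpr ⟨?_, ?_⟩⟩
    · intro t ht
      rw [Finset.mem_image] at ht
      obtain ⟨s, hs, rfl⟩ := ht
      exact hf2 S hS s hs
    · refine le_antisymm (le_trans Finset.card_image_le (le_of_eq hScard)) ?_
      have hjm : f S ≤ m := le_of_lt (hf1 S hS)
      have hsub : S ⊆ (S.image (fun s => (s + (m - f S)) % m)).image
          (fun t => (f S + t) % m) := by
        intro s hs
        have hsm : s < m := Finset.mem_range.mp (hSsub hs)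
        rw [Finset.mem_image]
        exact ⟨(s + (m - f S)) % m, Finset.mem_image_of_mem _ hs,
          back_mod m (f S) s hjm hsm⟩
      calc k = S.card := hScard.symm
        _ ≤ _ := Finset.card_le_card hsub
        _ ≤ (S.image (fun s => (s + (m - f S)) % m)).card := Finset.card_image_le
  have hcard := Finset.card_le_card_of_injOn _ hmaps hinj
  rw [hA, Finset.card_powersetCard, Finset.card_range] at hcard
  rw [Finset.card_product, Finset.card_range, Finset.card_powersetCard] at hcard
  have hJcard : J.card = m - Q.card := by
    rw [hJ, Finset.card_sdiff_of_subset hQ, Finset.card_range]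
  rwa [hJcard] at hcard


lemma asymp_core (k : ℕ) (hk : 1 ≤ k) (m n : ℕ) (hm : 2 * k ≤ m)
    (h : Nat.choose m k ≤ m * Nat.choose n k) :
    (1 / ((2:ℝ)^k * (k.factorial : ℝ))) * (m : ℝ) ^ (((k:ℝ) - 1) / k) ≤ (n : ℝ) := by
  have hm0 : 0 < m := lt_of_lt_of_le (by omega) hm
  have hmR : (0:ℝ) < m := by exact_mod_cast hm0
  have hfac : (0:ℝ) < (k.factorial : ℝ) := by exact_mod_cast k.factorial_pos
  set C : ℝ := (2:ℝ)^k * (k.factorial : ℝ) with hC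
  have hC1 : (1:ℝ) ≤ C := by
    have h1 : (1:ℝ) ≤ (2:ℝ)^k := one_le_pow₀ (by norm_num)
    have h2 : (1:ℝ) ≤ (k.factorial : ℝ) := by exact_mod_cast k.factorial_pos
    rw [hC]; nlinarith
  have hC0 : (0:ℝ) < C := lt_of_lt_of_le one_pos hC1
  have hkR : (1:ℝ) ≤ (k:ℝ) := by exact_mod_cast hk
  have hkne : (k:ℝ) ≠ 0 := by positivity
  -- step 1 : m^k ≤ C * (m * n^k)
  have step1 : (m:ℝ)^k ≤ C * ((m:ℝ) * (n:ℝ)^k) := by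
    have hb : ((m + 1 - k : ℕ) ^ k : ℝ) / (k.factorial : ℝ) ≤ (Nat.choose m k : ℝ) := by
      exact_mod_cast Nat.pow_le_choose k m
    have hhalf : (m:ℝ) / 2 ≤ ((m + 1 - k : ℕ) : ℝ) := by
      have h1 : ((m + 1 - k : ℕ) : ℝ) = (m:ℝ) + 1 - (k:ℝ) := by
        have hk' : k ≤ m + 1 := by omega
        push_cast [Nat.cast_sub hk']; ring
      have h2 : (k:ℝ) ≤ (m:ℝ)/2 := by
        have h3 : ((2*k : ℕ):ℝ) ≤ ((m:ℕ):ℝ) := by exact_mod_cast hm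
        push_cast at h3; linarith
      rw [h1]; linarith
    have hhp : ((m:ℝ)/2)^k ≤ ((m + 1 - k : ℕ) : ℝ)^k :=
      pow_le_pow_left₀ (by positivity) hhalf k
    have hch : (Nat.choose m k : ℝ) ≤ (m:ℝ) * (Nat.choose n k : ℝ) := by
      exact_mod_cast h
    have hnk : ((Nat.choose n k : ℕ) : ℝ) ≤ (n:ℝ)^k := by
      exact_mod_cast Nat.choose_le_pow n k
    have e1 : ((m:ℝ)/2)^k / (k.factorial : ℝ) ≤ (m:ℝ) * (n:ℝ)^k := by
      calc ((m:ℝ)/2)^k / (k.factorial : ℝ)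
          ≤ ((m + 1 - k : ℕ) : ℝ)^k / (k.factorial : ℝ) := by
            gcongr
        _ ≤ (Nat.choose m k : ℝ) := by exact_mod_cast hb
        _ ≤ (m:ℝ) * (Nat.choose n k : ℝ) := hch
        _ ≤ (m:ℝ) * (n:ℝ)^k := by
            exact mul_le_mul_of_nonneg_left hnk (by positivity)
    have e2 : ((m:ℝ)/2)^k ≤ (k.factorial : ℝ) * ((m:ℝ) * (n:ℝ)^k) := by
      rw [div_le_iff₀ hfac] at e1; linarith [e1]
    have e3 : ((m:ℝ)/2)^k = (m:ℝ)^k / 2^k := div_pow _ _ _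
    rw [e3, div_le_iff₀ (by positivity : (0:ℝ) < (2:ℝ)^k)] at e2
    calc (m:ℝ)^k ≤ (k.factorial : ℝ) * ((m:ℝ) * (n:ℝ)^k) * 2^k := e2
      _ = C * ((m:ℝ) * (n:ℝ)^k) := by rw [hC]; ring
  -- step 2 : m^(k-1) ≤ C * n^k
  have step2 : (m:ℝ)^(k-1) ≤ C * (n:ℝ)^k := by
    have hsplit : (m:ℝ)^k = (m:ℝ) * (m:ℝ)^(k-1) := by
      rw [← pow_succ']; congr 1; omega
    rw [hsplit] at step1
    have := (mul_le_mul_iff_right₀ hmR).mp (by linarith [step1] :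
      (m:ℝ) * (m:ℝ)^(k-1) ≤ (m:ℝ) * (C * (n:ℝ)^k))
    exact this
  -- step 3 : rpow manipulation
  have hcast : ((k:ℝ) - 1) = ((k - 1 : ℕ) : ℝ) := by
    push_cast [Nat.cast_sub hk]; ring
  have hinvk : (0:ℝ) ≤ ((k:ℝ))⁻¹ := by positivity
  have key : (m:ℝ) ^ (((k:ℝ) - 1) / k) ≤ C * n := by
    have hL : (m:ℝ) ^ (((k:ℝ) - 1) / k) = ((m:ℝ)^(k-1)) ^ ((k:ℝ))⁻¹ := by
      rw [div_eq_mul_inv, Real.rpow_mul hmR.le, hcast, Real.rpow_natCast]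
    have hmono : ((m:ℝ)^(k-1)) ^ ((k:ℝ))⁻¹ ≤ (C * (n:ℝ)^k) ^ ((k:ℝ))⁻¹ :=
      Real.rpow_le_rpow (by positivity) step2 hinvk
    have hR : (C * (n:ℝ)^k) ^ ((k:ℝ))⁻¹ = C ^ ((k:ℝ))⁻¹ * (n:ℝ) := by
      rw [Real.mul_rpow hC0.le (by positivity), ← Real.rpow_natCast (n:ℝ) k,
        ← Real.rpow_mul (by positivity), mul_inv_cancel₀ hkne, Real.rpow_one]
    have hCk : C ^ ((k:ℝ))⁻¹ ≤ C := by
      calc C ^ ((k:ℝ))⁻¹ ≤ C ^ (1:ℝ) :=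
            Real.rpow_le_rpow_of_exponent_le hC1 (inv_le_one_of_one_le₀ hkR)
        _ = C := Real.rpow_one C
    calc (m:ℝ) ^ (((k:ℝ) - 1) / k) = ((m:ℝ)^(k-1)) ^ ((k:ℝ))⁻¹ := hL
      _ ≤ (C * (n:ℝ)^k) ^ ((k:ℝ))⁻¹ := hmono
      _ = C ^ ((k:ℝ))⁻¹ * (n:ℝ) := hR
      _ ≤ C * n := mul_le_mul_of_nonneg_right hCk (by positivity)
  rw [one_div_mul_eq_div, div_le_iff₀ hC0]
  calc (m:ℝ) ^ (((k:ℝ) - 1) / k) ≤ C * n := key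
    _ = (n:ℝ) * C := mul_comm _ _

/-- if a seed of span `m` solves the cyclic `(m,k)`-problem (every word
with exactly `k` zeros is cyclically detected) then, with `n = m - |Q|` jokers,
`C(m,k)/m ≤ C(n,k)`; consequently, for fixed `k`, `n = Ω(m^{(k-1)/k})`. -/
theorem stmt13 (k : ℕ) (hk : 1 ≤ k) :
    (∀ m : ℕ, ∀ Q : Finset ℕ, Q ⊆ Finset.range m → 0 ∈ Q → m - 1 ∈ Q →
      (∀ w : ℕ → Bool, zerosIn m w = k →
        ∃ j < m, ∀ p ∈ Q, w ((j + p) % m) = true) →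
      Nat.choose m k ≤ m * Nat.choose (m - Q.card) k) ∧
    (∃ c : ℝ, 0 < c ∧ ∃ M : ℕ, ∀ m : ℕ, M ≤ m → ∀ Q : Finset ℕ,
      Q ⊆ Finset.range m → 0 ∈ Q → m - 1 ∈ Q →
      (∀ w : ℕ → Bool, zerosIn m w = k →
        ∃ j < m, ∀ p ∈ Q, w ((j + p) % m) = true) →
      c * (m : ℝ) ^ (((k : ℝ) - 1) / k) ≤ ((m - Q.card : ℕ) : ℝ)) := by
  constructor
  · intro m Q hQ h0 _ hdet
    have hm : 0 < m := Finset.mem_range.mp (hQ h0)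
    exact count_core m k Q hm hQ hdet
  · refine ⟨1 / ((2:ℝ)^k * (k.factorial : ℝ)), by positivity, 2 * k, ?_⟩
    intro m hm Q hQ h0 _ hdet
    have hm0 : 0 < m := Finset.mem_range.mp (hQ h0)
    exact asymp_core k hk m (m - Q.card) hm (count_core m k Q hm0 hQ hdet)
end

section
/- For every k ≥ 1 and m ≥ 1, there exists a seed Q of span m solving the cyclic (m,k)-problem with at most k·m^{(k-1)/k} jokers (up to ceiling effects: at most k·⌈m^{1/k}⌉^{k-1} jokers suffice). -/
lemma shiftClaim (B : ℕ) (hB : 1 ≤ B) :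
    ∀ i (S : Finset ℕ), S.card ≤ i →
      ∃ c, c < B ^ i ∧ ∀ d ∈ S, ∃ l, 1 ≤ l ∧ l ≤ i ∧ (d + c) % B ^ l < B ^ (l - 1) := by
  intro i
  induction i with
  | zero =>
    intro S hS
    have : S = ∅ := Finset.card_eq_zero.mp (Nat.le_zero.mp hS)
    subst this
    exact ⟨0, by simp, by simp⟩
  | succ i IH =>
    intro S hS
    by_cases hle : S.card ≤ i
    · obtain ⟨c, hc, hP⟩ := IH S hle
      refine ⟨c, lt_of_lt_of_le hc (Nat.pow_le_pow_right hB (Nat.le_succ i)), ?_⟩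
      intro d hd
      obtain ⟨l, h1, h2, h3⟩ := hP d hd
      exact ⟨l, h1, h2.trans (Nat.le_succ i), h3⟩
    · have hne : S.Nonempty := by
        rw [← Finset.card_pos]; omega
      obtain ⟨d0, hd0⟩ := hne
      obtain ⟨c', hc', hP⟩ := IH (S.erase d0)
        (by have := Finset.card_erase_of_mem hd0; omega)
      have hBi : 0 < B ^ i := Nat.pow_pos hB
      have hBsi : 0 < B ^ (i+1) := Nat.pow_pos hB
      have hpows : B * B ^ i = B ^ (i+1) := (pow_succ' B i).symm
      obtain ⟨r, hr⟩ : ∃ r, r = (d0 + c') % B ^ (i+1) := ⟨_, rfl⟩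
      obtain ⟨a, ha⟩ : ∃ a, a = r / B ^ i := ⟨_, rfl⟩
      obtain ⟨b, hbb⟩ : ∃ b, b = r % B ^ i := ⟨_, rfl⟩
      have hab : r = a * B ^ i + b := by
        rw [ha, hbb, Nat.mul_comm]
        exact (Nat.div_add_mod r (B ^ i)).symm
      have hbi : b < B ^ i := by rw [hbb]; exact Nat.mod_lt _ hBi
      have hrlt : r < B ^ (i+1) := by rw [hr]; exact Nat.mod_lt _ hBsi
      have haB : a < B := by
        rw [ha]
        apply Nat.div_lt_of_lt_mul
        rw [mul_comm, hpows]; exact hrlt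
      obtain ⟨t, htt⟩ : ∃ t, t = (B - a) % B := ⟨_, rfl⟩
      have htB : t < B := by rw [htt]; exact Nat.mod_lt _ hB
      have hdvd : B ∣ a + t := by
        rcases eq_or_ne a 0 with h | h
        · rw [htt, h]; simp
        · have h1 : B - a < B := by omega
          rw [htt, Nat.mod_eq_of_lt h1]
          exact ⟨1, by omega⟩
      obtain ⟨q, hq⟩ := hdvd
      refine ⟨c' + t * B ^ i, ?_, ?_⟩
      · have h1 : t * B ^ i ≤ (B - 1) * B ^ i :=
          Nat.mul_le_mul_right _ (by omega)
        have h2 : (B - 1) * B ^ i + B ^ i = B ^ (i+1) := by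
          have h3 : (B - 1) * B ^ i + B ^ i = (B - 1 + 1) * B ^ i := by ring
          rw [h3, show B - 1 + 1 = B from by omega, hpows]
        omega
      · intro d hd
        by_cases hdd : d = d0
        · refine ⟨i + 1, by omega, le_refl _, ?_⟩
          subst hdd
          have h3 : d + (c' + t * B ^ i) = (d + c') + t * B ^ i := by ring
          have h4 : ((d + c') + t * B ^ i) % B ^ (i+1) = (r + t * B ^ i) % B ^ (i+1) := by
            rw [hr, Nat.mod_add_mod]
          have h5 : r + t * B ^ i = b + q * B ^ (i+1) := by
            have e1 : r + t * B ^ i = b + (a + t) * B ^ i := by rw [hab]; ring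
            rw [e1, hq, ← hpows]; ring
          have h6 : (b + q * B ^ (i+1)) % B ^ (i+1) = b := by
            rw [Nat.add_mul_mod_self_right]
            exact Nat.mod_eq_of_lt (lt_of_lt_of_le hbi (Nat.pow_le_pow_right hB (Nat.le_succ i)))
          rw [h3, h4, h5, h6]
          simpa using hbi
        · obtain ⟨l, h1, h2, h3⟩ := hP d (Finset.mem_erase.mpr ⟨hdd, hd⟩)
          refine ⟨l, h1, h2.trans (Nat.le_succ i), ?_⟩
          obtain ⟨u, hu⟩ : B ^ l ∣ t * B ^ i := Dvd.dvd.mul_left (pow_dvd_pow B h2) t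
          have e : d + (c' + t * B ^ i) = (d + c') + B ^ l * u := by rw [← hu]; ring
          rw [e, Nat.add_mul_mod_self_left]
          exact h3


lemma cntLemma (B k l m : ℕ) (hB : 1 ≤ B) (hl : 1 ≤ l) (hlk : l ≤ k)
    (hm : 1 ≤ m) (hmB : m ≤ B ^ k) (s : Finset ℕ)
    (hs : ∀ x ∈ s, x < m ∧ x % B ^ l < B ^ (l - 1)) : s.card ≤ B ^ (k - 1) := by
  have hBl : 0 < B ^ l := Nat.pow_pos hB
  have hcard : s.card ≤ ((m - 1) / B ^ l + 1) * B ^ (l - 1) := by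
    have := Finset.card_le_card_of_injOn (fun x => (x / B ^ l, x % B ^ l))
      (s := s) (t := (Finset.range ((m - 1) / B ^ l + 1)) ×ˢ Finset.range (B ^ (l - 1)))
      (fun x hx => by
        obtain ⟨h1, h2⟩ := hs x hx
        simp only [Finset.mem_coe, Finset.mem_product, Finset.mem_range]
        exact ⟨Nat.lt_succ_of_le (Nat.div_le_div_right (by omega)), h2⟩)
      (fun x hx y hy hxy => by
        have h1 := Nat.div_add_mod x (B ^ l)
        have h2 := Nat.div_add_mod y (B ^ l)
        simp only [Prod.mk.injEq] at hxy
        rw [hxy.1, hxy.2] at h1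
        omega)
    simpa using this
  have hdiv : (m - 1) / B ^ l + 1 ≤ B ^ (k - l) := by
    have h1 : (m - 1) / B ^ l < B ^ (k - l) := by
      apply Nat.div_lt_of_lt_mul
      calc m - 1 < B ^ k := by omega
        _ = B ^ l * B ^ (k - l) := by rw [← pow_add]; congr 1; omega
    omega
  calc s.card ≤ ((m - 1) / B ^ l + 1) * B ^ (l - 1) := hcard
    _ ≤ B ^ (k - l) * B ^ (l - 1) := Nat.mul_le_mul_right _ hdiv
    _ = B ^ (k - 1) := by rw [← pow_add]; congr 1; omega

/-- for every `k ≥ 1` and `m ≥ 1` there is a seed of span `m` solving the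
cyclic `(m,k)`-problem with at most `k·⌈m^{1/k}⌉^{k-1}` jokers. -/
theorem stmt14 (k m : ℕ) (hk : 1 ≤ k) (hm : 1 ≤ m) :
    ∃ Q : Finset ℕ, Q ⊆ Finset.range m ∧ CSolves Q m k ∧
      m - Q.card ≤ k * (⌈(m : ℝ) ^ ((1 : ℝ) / k)⌉₊) ^ (k - 1) := by
  set B := ⌈(m : ℝ) ^ ((1 : ℝ) / k)⌉₊ with hBdef
  have hmR : (0:ℝ) ≤ (m:ℝ) := by positivity
  have hmB : m ≤ B ^ k := by
    have h1 : (m:ℝ) = ((m:ℝ) ^ ((1:ℝ)/k)) ^ (k:ℕ) := by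
      rw [← Real.rpow_natCast ((m:ℝ) ^ ((1:ℝ)/(k:ℝ))) k, ← Real.rpow_mul hmR]
      rw [one_div, inv_mul_cancel₀ (by exact_mod_cast (by omega : k ≠ 0)), Real.rpow_one]
    have h2 : ((m:ℝ)) ≤ (B:ℝ) ^ (k:ℕ) := by
      rw [h1]
      exact pow_le_pow_left₀ (Real.rpow_nonneg hmR _) (Nat.le_ceil _) k
    exact_mod_cast h2
  have hB1 : 1 ≤ B := by
    by_contra h
    have hB0 : B = 0 := by omega
    rw [hB0, Nat.zero_pow (by omega)] at hmB
    omega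
  by_cases hbig : m ≤ k * B ^ (k - 1)
  · refine ⟨∅, Finset.empty_subset _, ?_, by simpa using hbig⟩
    intro w hw
    exact ⟨0, hm, by simp⟩
  · push_neg at hbig
    have hBm : B ^ (k-1) < m :=
      lt_of_le_of_lt (Nat.le_mul_of_pos_left _ hk) hbig
    set J := (Finset.Icc 1 k).biUnion
      (fun l => (Finset.range m).filter (fun x => x % B ^ l < B ^ (l - 1))) with hJ
    have hJsub : J ⊆ Finset.range m := by
      rw [hJ]
      exact Finset.biUnion_subset.mpr (fun l _ => Finset.filter_subset _ _)
    have hmemJ : ∀ p, p < m → ∀ l, 1 ≤ l → l ≤ k → p % B ^ l < B ^ (l-1) → p ∈ J := by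
      intro p h1 l h2 h3 h4
      rw [hJ]
      exact Finset.mem_biUnion.mpr ⟨l, Finset.mem_Icc.mpr ⟨h2, h3⟩,
        Finset.mem_filter.mpr ⟨Finset.mem_range.mpr h1, h4⟩⟩
    have hsmall : ∀ p, p < B ^ (k-1) → p < m → p ∈ J := by
      intro p h1 h2
      refine hmemJ p h2 k hk (le_refl _) ?_
      rw [Nat.mod_eq_of_lt (lt_of_lt_of_le h1 (Nat.pow_le_pow_right hB1 (by omega)))]
      exact h1
    refine ⟨Finset.range m \ J, Finset.sdiff_subset, ?_, ?_⟩
    · -- CSolves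
      intro w hw
      set Z := (Finset.range m).filter (fun x => w x = false) with hZ
      have hZcard : Z.card ≤ k := hw
      rcases Z.eq_empty_or_nonempty with hZe | ⟨z0, hz0⟩
      · refine ⟨0, hm, fun p hp => ?_⟩
        have hpm : p < m := Finset.mem_range.mp (Finset.mem_sdiff.mp hp).1
        rw [zero_add, Nat.mod_eq_of_lt hpm]
        by_contra h
        have hpz : p ∈ Z := by
          rw [hZ, Finset.mem_filter]
          exact ⟨Finset.mem_range.mpr hpm, by simpa using h⟩
        rw [hZe] at hpz
        simp at hpz
      · have hz0m : z0 < m := Finset.mem_range.mp (Finset.mem_filter.mp hz0).1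
        set D := (Z.erase z0).image (fun z => (z + (m - z0)) % m) with hD
        have hDcard : D.card ≤ k - 1 := by
          refine le_trans Finset.card_image_le ?_
          rw [Finset.card_erase_of_mem hz0]
          omega
        obtain ⟨c, hc, hP⟩ := shiftClaim B hB1 (k-1) D hDcard
        have hcm : c < m := lt_trans hc hBm
        set j := (z0 + (m - c)) % m with hj
        have hjm : j < m := Nat.mod_lt _ (by omega)
        refine ⟨j, hjm, fun p hp => ?_⟩
        obtain ⟨hpr, hpJ⟩ := Finset.mem_sdiff.mp hp
        have hpm : p < m := Finset.mem_range.mp hpr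
        by_contra hwt
        set x := (j + p) % m with hx
        have hxm : x < m := Nat.mod_lt _ (by omega)
        have hwx : w x = false := by simpa using hwt
        set d := (x + (m - z0)) % m with hd
        have hdm : d < m := Nat.mod_lt _ (by omega)
        -- key congruence : (d + c) % m = p
        have key : (d + c) % m = p := by
          have h1 : d ≡ x + (m - z0) [MOD m] := (Nat.mod_modEq _ _)
          have h2 : x ≡ j + p [MOD m] := (Nat.mod_modEq _ _)
          have h3 : j ≡ z0 + (m - c) [MOD m] := (Nat.mod_modEq _ _)
          have hchain : d + c ≡ p + 2 * m [MOD m] := by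
            calc d + c ≡ (x + (m - z0)) + c [MOD m] := h1.add_right c
              _ ≡ ((j + p) + (m - z0)) + c [MOD m] :=
                  (h2.add_right (m - z0)).add_right c
              _ = j + (p + (m - z0) + c) := by ring
              _ ≡ (z0 + (m - c)) + (p + (m - z0) + c) [MOD m] :=
                  h3.add_right _
              _ = p + 2 * m := by omega
          rw [show (d + c) % m = (p + 2 * m) % m from hchain,
            show p + 2 * m = p + m * 2 from by ring,
            Nat.add_mul_mod_self_left, Nat.mod_eq_of_lt hpm]
        -- now contradiction: p ∈ J
        apply hpJ
        by_cases hxz : x = z0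
        · have hd0 : d = 0 := by
            rw [hd, hxz, show z0 + (m - z0) = m from by omega, Nat.mod_self]
          rw [hd0, zero_add, Nat.mod_eq_of_lt hcm] at key
          exact hsmall p (key ▸ hc) hpm
        · have hxZ : x ∈ Z.erase z0 := by
            refine Finset.mem_erase.mpr ⟨hxz, ?_⟩
            rw [hZ, Finset.mem_filter]
            exact ⟨Finset.mem_range.mpr hxm, hwx⟩
          have hdD : d ∈ D := by
            rw [hD]
            exact Finset.mem_image.mpr ⟨x, hxZ, hd.symm⟩
          obtain ⟨l, hl1, hl2, hl3⟩ := hP d hdD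
          by_cases hwrap : d + c < m
          · rw [Nat.mod_eq_of_lt hwrap] at key
            exact hmemJ p hpm l hl1 (by omega) (key ▸ hl3)
          · have hsub : (d + c) % m = d + c - m := by
              rw [Nat.mod_eq_sub_mod (by omega)]
              exact Nat.mod_eq_of_lt (by omega)
            rw [hsub] at key
            exact hsmall p (by omega) hpm
    · -- cardinality
      have hJcard : J.card ≤ k * B ^ (k - 1) := by
        calc J.card ≤ ∑ l ∈ Finset.Icc 1 k,
              ((Finset.range m).filter (fun x => x % B ^ l < B ^ (l - 1))).card :=
            Finset.card_biUnion_le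
          _ ≤ ∑ l ∈ Finset.Icc 1 k, B ^ (k-1) := by
            refine Finset.sum_le_sum (fun l hl => ?_)
            obtain ⟨hl1, hl2⟩ := Finset.mem_Icc.mp hl
            refine cntLemma B k l m hB1 hl1 hl2 hm hmB _ (fun y hy => ?_)
            obtain ⟨hy1, hy2⟩ := Finset.mem_filter.mp hy
            exact ⟨Finset.mem_range.mp hy1, hy2⟩
          _ = k * B ^ (k-1) := by
            rw [Finset.sum_const, Nat.card_Icc]
            simp [Nat.smul_one_eq_cast]
      have hJm : J.card ≤ m := by
        refine le_trans (Finset.card_le_card hJsub) ?_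
        simp
      have hQJ : (Finset.range m \ J).card = m - J.card := by
        rw [Finset.card_sdiff_of_subset hJsub, Finset.card_range]
      rw [hQJ]
      omega
end

section
/- For fixed k, let w(m) be the maximal weight of a seed solving the linear (m,k)-problem. Then m - w(m) = Θ(m^{k/(k+1)}). -/
/-- The maximal weight of a seed solving the linear `(m,k)`-problem. -/
noncomputable def wmax (k m : ℕ) : ℕ :=
  sSup {c | ∃ Q : Finset ℕ, 0 ∈ Q ∧ Solves Q m k ∧ Q.card = c}

/-! ### Auxiliary material for the proof of `stmt15`. -/

open Finset

/-- `x` is a joker position for the level-`k`, base-`t` cyclic pattern. -/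
def IsJok (k t x : ℕ) : Prop := ∃ i ∈ Finset.Icc 1 k, t^i - t^(i-1) ≤ x % t^i

instance (k t x : ℕ) : Decidable (IsJok k t x) := by unfold IsJok; infer_instance

lemma isJok_of_add_pow {k t x : ℕ} (c : ℕ) (h : IsJok k t (x + c * t^k)) : IsJok k t x := by
  obtain ⟨i, hi, hx⟩ := h
  simp only [mem_Icc] at hi
  refine ⟨i, by simp [mem_Icc, hi.1, hi.2], ?_⟩
  have he : c * t^k = (c * t^(k-i)) * t^i := by
    rw [mul_assoc, ← pow_add]; congr 2; omega
  rwa [he, Nat.add_mul_mod_self_right] at hx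

lemma isJok_add_pow {k t x : ℕ} (c : ℕ) (h : IsJok k t x) : IsJok k t (x + c * t^k) := by
  obtain ⟨i, hi, hx⟩ := h
  simp only [mem_Icc] at hi
  refine ⟨i, by simp [mem_Icc, hi.1, hi.2], ?_⟩
  have he : c * t^k = (c * t^(k-i)) * t^i := by
    rw [mul_assoc, ← pow_add]; congr 2; omega
  rwa [he, Nat.add_mul_mod_self_right]

lemma isJok_succ {k t x : ℕ} (h : IsJok k t x) : IsJok (k+1) t x := by
  obtain ⟨i, hi, hx⟩ := h
  simp only [mem_Icc] at hi
  exact ⟨i, by simp only [mem_Icc]; omega, hx⟩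

/-- Cyclic solver: for at most `k` zeros there is a shift putting all of them on jokers. -/
lemma cyc_s15 (t : ℕ) (ht : 2 ≤ t) : ∀ (k : ℕ) (Z : Finset ℕ), Z.card ≤ k →
    ∃ s < t^k, ∀ z ∈ Z, IsJok k t (z + s) := by
  intro k
  induction k with
  | zero =>
    intro Z hZ
    rw [Nat.le_zero, card_eq_zero] at hZ
    exact ⟨0, by positivity, by simp [hZ]⟩
  | succ k ih =>
    intro Z hZ
    rcases Z.eq_empty_or_nonempty with rfl | ⟨z₀, hz₀⟩
    · exact ⟨0, by positivity, by simp⟩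
    · obtain ⟨s₁, hs₁, hjok⟩ := ih (Z.erase z₀) (by
        have := card_erase_of_mem hz₀; omega)
      set r := (z₀ + s₁) % t^(k+1) with hr
      have hrlt : r < t^(k+1) := Nat.mod_lt _ (by positivity)
      set b := r / t^k with hb
      have hblt : b < t := by
        rw [hb, Nat.div_lt_iff_lt_mul (by positivity : 0 < t^k), ← pow_succ']
        exact hrlt
      have hts : t^(k+1) = t^k * t := pow_succ t k
      have h3 : (t-1) * t^k + t^k = t^k * t := by
        have h4 : t - 1 + 1 = t := by omega
        calc (t-1)*t^k + t^k = (t-1+1) * t^k := by ring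
          _ = t^k * t := by rw [h4, mul_comm]
      refine ⟨s₁ + (t - 1 - b) * t^k, ?_, ?_⟩
      · have h5 : (t - 1 - b) * t^k ≤ (t-1) * t^k := Nat.mul_le_mul_right _ (Nat.sub_le (t-1) b)
        calc s₁ + (t-1-b)*t^k < t^k + (t-1-b)*t^k := Nat.add_lt_add_right hs₁ _
          _ ≤ t^k + (t-1)*t^k := Nat.add_le_add_left h5 _
          _ = t^(k+1) := by rw [add_comm, h3, ← hts]
      · intro z hz
        rcases eq_or_ne z z₀ with rfl | hne
        · -- top-level joker
          refine ⟨k+1, by simp [mem_Icc], ?_⟩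
          have h1 : z + (s₁ + (t-1-b)*t^k) = (z + s₁) + (t-1-b)*t^k := by ring
          rw [h1, ← Nat.mod_add_mod, ← hr]
          have hdm := Nat.div_add_mod r (t^k)
          rw [← hb] at hdm
          have hmod : r % t^k < t^k := Nat.mod_lt _ (by positivity)
          have h2 : t - 1 - b + b = t - 1 := by omega
          have heq : r + (t - 1 - b) * t ^ k = r % t ^ k + (t - 1) * t ^ k := by
            calc r + (t-1-b)*t^k = (t^k * b + r % t^k) + (t-1-b)*t^k := by rw [hdm]
              _ = r % t^k + (t-1-b+b) * t^k := by ring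
              _ = r % t^k + (t-1)*t^k := by rw [h2]
          have hlt : r % t^k + (t-1)*t^k < t^(k+1) := by
            calc r % t^k + (t-1)*t^k < t^k + (t-1)*t^k := Nat.add_lt_add_right hmod _
              _ = t^(k+1) := by rw [add_comm, h3, ← hts]
          have h6 : t^(k+1) - t^k = (t-1)*t^k := by rw [hts, ← h3]; omega
          rw [heq, Nat.mod_eq_of_lt hlt]
          simp only [Nat.add_sub_cancel]
          rw [h6]
          exact Nat.le_add_left _ _
        · have hzz := hjok z (by simp [mem_erase, hne, hz])
          have h1 : z + (s₁ + (t-1-b)*t^k) = (z + s₁) + (t-1-b)*t^k := by ring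
          rw [h1]
          exact isJok_succ (isJok_add_pow _ hzz)

/-- The linear seed built from the cyclic joker pattern. -/
def QC (k t N : ℕ) : Finset ℕ := (range N).filter (fun x => ¬ IsJok k t x)

lemma zero_mem_QC {k t N : ℕ} (ht : 2 ≤ t) (hN : 0 < N) : 0 ∈ QC k t N := by
  simp only [QC, mem_filter, mem_range]
  refine ⟨hN, ?_⟩
  rintro ⟨i, hi, hx⟩
  simp only [mem_Icc] at hi
  rw [Nat.zero_mod] at hx
  have : t^(i-1) < t^i := Nat.pow_lt_pow_right (by omega) (by omega)
  omega

lemma QC_solves (k t m : ℕ) (ht : 2 ≤ t) (hl : t^k ≤ m) : Solves (QC k t (m - t^k)) m k := by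
  intro w hw
  obtain ⟨s, hs, hj⟩ := cyc_s15 t ht k ((range m).filter (fun j => w j = false)) hw
  refine ⟨t^k - s, ?_⟩
  intro p hp
  simp only [QC, mem_filter, mem_range] at hp
  refine ⟨by omega, ?_⟩
  by_contra hfalse
  have hzm : t^k - s + p ∈ (range m).filter (fun j => w j = false) := by
    simp only [mem_filter, mem_range]
    exact ⟨by omega, by simpa using hfalse⟩
  have h1 := hj _ hzm
  have h2 : t^k - s + p + s = p + 1 * t^k := by omega
  rw [h2] at h1
  exact hp.2 (isJok_of_add_pow 1 h1)

lemma count_mod (N q r : ℕ) (hq : 0 < q) :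
    ((range N).filter (fun x => q - r ≤ x % q)).card ≤ (N / q + 1) * r := by
  have h := card_le_card_of_injOn (f := fun x => (x / q, x % q - (q - r)))
    (s := (range N).filter (fun x => q - r ≤ x % q))
    (t := (range (N/q+1)) ×ˢ (range r)) ?_ ?_
  · simpa using h
  · intro x hx
    simp only [mem_coe, mem_filter, mem_range] at hx
    simp only [mem_coe, mem_product, mem_range]
    have hm := Nat.mod_lt x hq
    exact ⟨Nat.lt_succ_of_le (Nat.div_le_div_right hx.1.le), by omega⟩
  · intro a ha b hb hab
    simp only [coe_filter, mem_range, Set.mem_setOf_eq] at ha hb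
    simp only [Prod.mk.injEq] at hab
    have ha2 := Nat.div_add_mod a q
    have hb2 := Nat.div_add_mod b q
    have hma := Nat.mod_lt a hq
    have hmb := Nat.mod_lt b hq
    have hXY : q * (a / q) = q * (b / q) := by rw [hab.1]
    omega

lemma jok_count (k t N : ℕ) (ht : 2 ≤ t) :
    ((range N).filter (fun x => IsJok k t x)).card ≤ k * (N / t + t^(k-1)) := by
  have hsub : (range N).filter (fun x => IsJok k t x) ⊆
      (Icc 1 k).biUnion (fun i => (range N).filter (fun x => t^i - t^(i-1) ≤ x % t^i)) := by
    intro x hx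
    simp only [mem_filter] at hx; unfold IsJok at hx
    obtain ⟨i, hi, hxi⟩ := hx.2
    simp only [mem_biUnion]
    exact ⟨i, hi, mem_filter.2 ⟨hx.1, hxi⟩⟩
  calc ((range N).filter (fun x => IsJok k t x)).card
      ≤ ((Icc 1 k).biUnion (fun i => (range N).filter (fun x => t^i - t^(i-1) ≤ x % t^i))).card :=
        card_le_card hsub
    _ ≤ ∑ i ∈ Icc 1 k, ((range N).filter (fun x => t^i - t^(i-1) ≤ x % t^i)).card :=
        card_biUnion_le
    _ ≤ ∑ _i ∈ Icc 1 k, (N / t + t^(k-1)) := by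
        apply sum_le_sum
        intro i hi
        simp only [mem_Icc] at hi
        have h1 : ((range N).filter (fun x => t^i - t^(i-1) ≤ x % t^i)).card
            ≤ (N / t^i + 1) * t^(i-1) := count_mod N _ _ (by positivity)
        have h2 : (N / t^i) * t^(i-1) ≤ N / t := by
          have hti : t^i = t * t^(i-1) := by
            conv_lhs => rw [show i = 1 + (i-1) by omega]
            rw [pow_add, pow_one]
          rw [hti, ← Nat.div_div_eq_div_mul]
          exact Nat.div_mul_le_self _ _
        have h3 : t^(i-1) ≤ t^(k-1) := Nat.pow_le_pow_right (by omega) (by omega)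
        calc ((range N).filter (fun x => t^i - t^(i-1) ≤ x % t^i)).card
            ≤ (N / t^i + 1) * t^(i-1) := h1
          _ = (N / t^i) * t^(i-1) + t^(i-1) := by ring
          _ ≤ N / t + t^(k-1) := by omega
    _ = k * (N / t + t^(k-1)) := by rw [sum_const, Nat.card_Icc]; simp [mul_comm]

lemma QC_weight (k t m : ℕ) (ht : 2 ≤ t) (hl : t^k ≤ m) :
    m - (QC k t (m - t^k)).card ≤ t^k + k * (m / t + t^(k-1)) := by
  have h1 : ((range (m - t^k)).filter (fun x => IsJok k t x)).card
      + ((range (m - t^k)).filter (fun x => ¬ IsJok k t x)).card = m - t^k := by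
    rw [card_filter_add_card_filter_not, card_range]
  have h2 := jok_count k t (m - t^k) ht
  have h3 : (m - t^k) / t ≤ m / t := Nat.div_le_div_right (Nat.sub_le m _)
  have h4 : k * ((m - t^k)/t + t^(k-1)) ≤ k * (m/t + t^(k-1)) :=
    Nat.mul_le_mul_left _ (by omega)
  unfold QC
  omega

lemma solves_subset_range {Q : Finset ℕ} {m k : ℕ} (h : Solves Q m k) : Q ⊆ range m := by
  obtain ⟨i, hi⟩ := h (fun _ => true) (by simp [zerosIn])
  intro p hp
  have := (hi p hp).1
  simp only [mem_range]; omega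

/-- The counting lower bound: if `Q` solves `(m,k)` then `C(m,k) ≤ (n+1)·C(n,k)`, `n = m - |Q|`. -/
lemma counting {Q : Finset ℕ} {m k : ℕ} (h0 : 0 ∈ Q) (hs : Solves Q m k) :
    m.choose k ≤ (m - Q.card + 1) * ((m - Q.card).choose k) := by
  classical
  set n := m - Q.card with hn
  have hQne : Q.Nonempty := ⟨0, h0⟩
  have hQr : Q ⊆ range m := solves_subset_range hs
  have hcardmax : Q.card ≤ Q.max' hQne + 1 := by
    have : Q ⊆ range (Q.max' hQne + 1) := fun x hx => by
      simp only [mem_range]; exact Nat.lt_succ_of_le (Q.le_max' x hx)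
    simpa using card_le_card this
  set S := (range m).powersetCard k with hS
  set wd : Finset ℕ → ℕ → Bool := fun Z j => decide (j ∉ Z) with hwd
  have hzeros : ∀ Z ∈ S, zerosIn m (wd Z) ≤ k := by
    intro Z hZ
    simp only [hS, mem_powersetCard] at hZ
    have : (range m).filter (fun j => wd Z j = false) = Z := by
      ext j
      simp only [mem_filter, mem_range, hwd, decide_eq_false_iff_not, not_not]
      constructor
      · exact fun h => h.2
      · intro hj
        exact ⟨by simpa using mem_range.1 (hZ.1 hj), hj⟩
    rw [zerosIn, this, hZ.2]
  have hsub : S ⊆ (range (n+1)).biUnion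
      (fun i => S.filter (fun Z => MatchesAt Q m (wd Z) i)) := by
    intro Z hZ
    obtain ⟨i, hi⟩ := hs (wd Z) (hzeros Z hZ)
    simp only [mem_biUnion, mem_range, mem_filter]
    refine ⟨i, ?_, hZ, hi⟩
    have h1 := (hi _ (Q.max'_mem hQne)).1
    omega
  have hfil : ∀ i, (S.filter (fun Z => MatchesAt Q m (wd Z) i)).card ≤ n.choose k := by
    intro i
    rcases (S.filter (fun Z => MatchesAt Q m (wd Z) i)).eq_empty_or_nonempty with he | ⟨Z₀, hZ₀⟩
    · simp [he]
    · simp only [mem_filter] at hZ₀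
      have hvalid : ∀ p ∈ Q, i + p < m := fun p hp => (hZ₀.2 p hp).1
      have himg : Q.image (i + ·) ⊆ range m := by
        intro x hx
        obtain ⟨p, hp, rfl⟩ := mem_image.1 hx
        exact mem_range.2 (hvalid p hp)
      have hcardimg : (Q.image (i + ·)).card = Q.card :=
        card_image_of_injective _ (fun a b => by omega)
      have hsdcard : ((range m) \ (Q.image (i + ·))).card = n := by
        rw [card_sdiff_of_subset himg, card_range, hcardimg]
      have hss : S.filter (fun Z => MatchesAt Q m (wd Z) i) ⊆
          ((range m) \ (Q.image (i + ·))).powersetCard k := by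
        intro Z hZ
        simp only [mem_filter, hS, mem_powersetCard] at hZ
        refine mem_powersetCard.2 ⟨?_, hZ.1.2⟩
        intro z hz
        refine mem_sdiff.2 ⟨hZ.1.1 hz, ?_⟩
        intro hzi
        obtain ⟨p, hp, rfl⟩ := mem_image.1 hzi
        have := (hZ.2 p hp).2
        simp only [hwd, decide_eq_true_eq] at this
        exact this hz
      calc (S.filter (fun Z => MatchesAt Q m (wd Z) i)).card
          ≤ (((range m) \ (Q.image (i + ·))).powersetCard k).card := card_le_card hss
        _ = n.choose k := by rw [card_powersetCard, hsdcard]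
  calc m.choose k = S.card := by rw [hS, card_powersetCard, card_range]
    _ ≤ ((range (n+1)).biUnion (fun i => S.filter (fun Z => MatchesAt Q m (wd Z) i))).card :=
        card_le_card hsub
    _ ≤ ∑ i ∈ range (n+1), (S.filter (fun Z => MatchesAt Q m (wd Z) i)).card :=
        card_biUnion_le
    _ ≤ ∑ _i ∈ range (n+1), n.choose k := sum_le_sum (fun i _ => hfil i)
    _ = (n+1) * (n.choose k) := by rw [sum_const, card_range, smul_eq_mul]

lemma wmax_bdd (k m : ℕ) : BddAbove {c | ∃ Q : Finset ℕ, 0 ∈ Q ∧ Solves Q m k ∧ Q.card = c} := by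
  refine ⟨m, ?_⟩
  rintro c ⟨Q, h0, hs, rfl⟩
  simpa using card_le_card (solves_subset_range hs)

lemma card_le_wmax {k m : ℕ} {Q : Finset ℕ} (h0 : 0 ∈ Q) (hs : Solves Q m k) :
    Q.card ≤ wmax k m :=
  le_csSup (wmax_bdd k m) ⟨Q, h0, hs, rfl⟩

lemma wmax_spec {k m : ℕ} (hne : ∃ Q : Finset ℕ, 0 ∈ Q ∧ Solves Q m k) :
    ∃ Q : Finset ℕ, 0 ∈ Q ∧ Solves Q m k ∧ Q.card = wmax k m := by
  obtain ⟨Q, h0, hs⟩ := hne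
  exact Nat.sSup_mem (s := {c | ∃ Q : Finset ℕ, 0 ∈ Q ∧ Solves Q m k ∧ Q.card = c})
    ⟨Q.card, Q, h0, hs, rfl⟩ (wmax_bdd k m)

lemma rpow_e_pow (k m : ℕ) : ((m:ℝ) ^ ((k:ℝ)/(k+1))) ^ (k+1) = (m:ℝ)^k := by
  rw [← Real.rpow_natCast ((m:ℝ) ^ ((k:ℝ)/(k+1))) (k+1), ← Real.rpow_mul (Nat.cast_nonneg m)]
  push_cast
  rw [div_mul_cancel₀ _ (by positivity : (0:ℝ) < (k:ℝ)+1).ne', Real.rpow_natCast]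

lemma le_c_rpow {k m a : ℕ} {C : ℝ} (hC : 0 ≤ C) (h : ((a:ℝ))^(k+1) ≤ C^(k+1) * (m:ℝ)^k) :
    (a:ℝ) ≤ C * (m:ℝ) ^ ((k:ℝ)/(k+1)) := by
  have h2 : ((a:ℝ))^(k+1) ≤ (C * (m:ℝ)^((k:ℝ)/(k+1)))^(k+1) := by
    rw [mul_pow, rpow_e_pow]; exact h
  exact le_of_pow_le_pow_left₀ (Nat.succ_ne_zero k) (by positivity) h2

lemma c_rpow_le {k m a : ℕ} {C : ℝ} (h : C^(k+1) * (m:ℝ)^k ≤ ((a:ℝ))^(k+1)) :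
    C * (m:ℝ) ^ ((k:ℝ)/(k+1)) ≤ (a:ℝ) := by
  have h2 : (C * (m:ℝ)^((k:ℝ)/(k+1)))^(k+1) ≤ ((a:ℝ))^(k+1) := by
    rw [mul_pow, rpow_e_pow]; exact h
  exact le_of_pow_le_pow_left₀ (Nat.succ_ne_zero k) (by positivity) h2

lemma rpow_inv_pow {x : ℝ} (hx : 0 ≤ x) (k : ℕ) : (x ^ ((1:ℝ)/(k+1))) ^ (k+1) = x := by
  rw [← Real.rpow_natCast (x ^ ((1:ℝ)/(k+1))) (k+1), ← Real.rpow_mul hx]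
  push_cast
  rw [one_div, inv_mul_cancel₀ (by positivity : (0:ℝ) < (k:ℝ)+1).ne', Real.rpow_one]

lemma choose_le_pow' (n k : ℕ) : n.choose k ≤ n^k :=
  le_trans (by rw [Nat.descFactorial_eq_factorial_mul_choose]
               exact Nat.le_mul_of_pos_left _ (Nat.factorial_pos k))
    (Nat.descFactorial_le_pow n k)

/-- for fixed `k`, the maximal weight `w(m)` of a seed solving the linear
`(m,k)`-problem satisfies `m - w(m) = Θ(m^{k/(k+1)})`. -/
theorem stmt15 (k : ℕ) (hk : 1 ≤ k) :
    ∃ c₁ c₂ : ℝ, 0 < c₁ ∧ 0 < c₂ ∧ ∃ M : ℕ, ∀ m : ℕ, M ≤ m →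
      c₁ * (m : ℝ) ^ ((k : ℝ) / (k + 1)) ≤ ((m - wmax k m : ℕ) : ℝ) ∧
      ((m - wmax k m : ℕ) : ℝ) ≤ c₂ * (m : ℝ) ^ ((k : ℝ) / (k + 1)) := by
  have hApos : (0:ℝ) < 2^(2*k+1) * (k.factorial : ℝ) := by positivity
  refine ⟨((2^(2*k+1) * (k.factorial : ℝ))⁻¹) ^ ((1:ℝ)/(k+1)),
    (2:ℝ)^(k+1) + k + k * 2^(k+1), ?_, ?_,
    2^(k*(k+1)) + 2^k * k.factorial + 2*k + 2, ?_⟩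
  · exact Real.rpow_pos_of_pos (by positivity) _
  · positivity
  intro m hm
  have hp1 : (1:ℕ) ≤ 2^(k*(k+1)) := Nat.one_le_two_pow
  have hp2 : (1:ℕ) ≤ 2^k * k.factorial := Nat.mul_pos (Nat.two_pow_pos k) k.factorial_pos
  have hm2 : 2 ≤ m := by omega
  have hmk : 2*k ≤ m := by omega
  -- the base t
  have hex : ∃ t, m ≤ t^(k+1) := ⟨m, Nat.le_self_pow (Nat.succ_ne_zero k) m⟩
  set t := Nat.find hex with htdef
  have hP : m ≤ t^(k+1) := Nat.find_spec hex
  have ht2 : 2 ≤ t := by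
    rcases Nat.lt_or_ge t 2 with h | h
    · exfalso
      have h1 : t^(k+1) ≤ 1 := by
        calc t^(k+1) ≤ 1^(k+1) := Nat.pow_le_pow_left (by omega) _
          _ = 1 := one_pow _
      omega
    · exact h
  have hmin : (t-1)^(k+1) < m := by
    have := Nat.find_min hex (show t-1 < t by omega)
    omega
  have hA : t^(k+1) ≤ 2^(k+1) * m := by
    calc t^(k+1) ≤ (2*(t-1))^(k+1) := Nat.pow_le_pow_left (by omega) _
      _ = 2^(k+1) * (t-1)^(k+1) := by rw [mul_pow]
      _ ≤ 2^(k+1) * m := Nat.mul_le_mul_left _ (by omega)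
  have htk_lt : t^k < m := by
    have h1 : (t^k)^(k+1) ≤ 2^(k*(k+1)) * m^k := by
      calc (t^k)^(k+1) = (t^(k+1))^k := by rw [← pow_mul, ← pow_mul, mul_comm]
        _ ≤ (2^(k+1) * m)^k := Nat.pow_le_pow_left hA k
        _ = 2^((k+1)*k) * m^k := by rw [mul_pow, ← pow_mul]
        _ = 2^(k*(k+1)) * m^k := by rw [mul_comm (k+1) k]
    have h2 : 2^(k*(k+1)) * m^k < m^(k+1) := by
      have hlt : 2^(k*(k+1)) < m := by omega
      calc 2^(k*(k+1)) * m^k < m * m^k := by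
            exact Nat.mul_lt_mul_of_lt_of_le hlt (le_refl _) (by positivity)
        _ = m^(k+1) := by ring
    by_contra hc
    push_neg at hc
    have := Nat.pow_le_pow_left hc (k+1)
    omega
  have hsol := QC_solves k t m ht2 (le_of_lt htk_lt)
  have h0Q : 0 ∈ QC k t (m - t^k) := zero_mem_QC ht2 (by omega)
  have hwQ := QC_weight k t m ht2 (le_of_lt htk_lt)
  have hwle := card_le_wmax h0Q hsol
  set n := m - wmax k m with hn
  have hnle : n ≤ t^k + k*(m/t + t^(k-1)) := by
    have h5 := Nat.sub_le_sub_left hwle m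
    omega
  have hme : 0 ≤ (m:ℝ) ^ ((k:ℝ)/(k+1)) := Real.rpow_nonneg (Nat.cast_nonneg m) _
  constructor
  · -- lower bound
    obtain ⟨Q, h0, hs, hcard⟩ := wmax_spec ⟨_, h0Q, hsol⟩
    have hcnt := counting h0 hs
    rw [hcard, ← hn] at hcnt
    have hc1 : m.choose k ≤ (n+1)^(k+1) := by
      calc m.choose k ≤ (n+1) * (n.choose k) := hcnt
        _ ≤ (n+1) * (n+1)^k := Nat.mul_le_mul_left _
            ((choose_le_pow' n k).trans (Nat.pow_le_pow_left (by omega) k))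
        _ = (n+1)^(k+1) := by ring
    have hc2 : (m+1-k)^k ≤ k.factorial * ((n+1)^(k+1)) := by
      calc (m+1-k)^k ≤ m.descFactorial k := Nat.pow_sub_le_descFactorial m k
        _ = k.factorial * m.choose k := Nat.descFactorial_eq_factorial_mul_choose m k
        _ ≤ _ := Nat.mul_le_mul_left _ hc1
    have hc3 : m^k ≤ 2^k * (k.factorial * (n+1)^(k+1)) := by
      have hm1 : m ≤ 2 * (m+1-k) := by omega
      calc m^k ≤ (2*(m+1-k))^k := Nat.pow_le_pow_left hm1 k
        _ = 2^k * (m+1-k)^k := by rw [mul_pow]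
        _ ≤ _ := Nat.mul_le_mul_left _ hc2
    have hn1 : 1 ≤ n := by
      by_contra hc
      push_neg at hc
      have hn0 : n = 0 := by omega
      rw [hn0] at hc3
      simp only [zero_add, one_pow, mul_one] at hc3
      have hmm : m ≤ m^k := Nat.le_self_pow (by omega) m
      have : 2^k * k.factorial ≤ 2^(k*(k+1)) * (2^k * k.factorial) := by
        exact Nat.le_mul_of_pos_left _ (by positivity)
      omega
    have h2p : (2:ℕ)^k * 2^(k+1) = 2^(2*k+1) := by rw [← pow_add]; congr 1; omega
    have hc4 : m^k ≤ 2^(2*k+1) * k.factorial * n^(k+1) := by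
      have hnn : (n+1)^(k+1) ≤ (2*n)^(k+1) := Nat.pow_le_pow_left (by omega) _
      calc m^k ≤ 2^k * (k.factorial * (n+1)^(k+1)) := hc3
        _ ≤ 2^k * (k.factorial * ((2*n)^(k+1))) :=
            Nat.mul_le_mul_left _ (Nat.mul_le_mul_left _ hnn)
        _ = 2^(2*k+1) * k.factorial * n^(k+1) := by rw [mul_pow, ← h2p]; ring
    have hcR : (m:ℝ)^k ≤ (2^(2*k+1) * (k.factorial:ℝ)) * (n:ℝ)^(k+1) := by
      exact_mod_cast hc4
    apply c_rpow_le
    rw [rpow_inv_pow (le_of_lt (inv_pos.2 hApos)) k, inv_mul_le_iff₀ hApos]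
    exact hcR
  · -- upper bound
    have hBtk : ((t^k : ℕ):ℝ) ≤ 2^(k+1) * (m:ℝ) ^ ((k:ℝ)/(k+1)) := by
      apply le_c_rpow (by positivity)
      have hN : (t^k)^(k+1) ≤ (2^(k+1))^(k+1) * m^k := by
        calc (t^k)^(k+1) = (t^(k+1))^k := by rw [← pow_mul, ← pow_mul, mul_comm]
          _ ≤ (2^(k+1)*m)^k := Nat.pow_le_pow_left hA k
          _ = (2^(k+1))^k * m^k := by rw [mul_pow]
          _ ≤ (2^(k+1))^(k+1) * m^k :=
              Nat.mul_le_mul_right _ (Nat.pow_le_pow_right Nat.one_le_two_pow (by omega))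
      exact_mod_cast hN
    have hCdv : ((m/t : ℕ):ℝ) ≤ (m:ℝ) ^ ((k:ℝ)/(k+1)) := by
      have h1 : ((m/t)*t)^(k+1) ≤ m^(k+1) := Nat.pow_le_pow_left (Nat.div_mul_le_self m t) _
      have h2 : (m/t)^(k+1) * t^(k+1) ≤ m^k * t^(k+1) := by
        calc (m/t)^(k+1) * t^(k+1) = ((m/t)*t)^(k+1) := by rw [mul_pow]
          _ ≤ m^(k+1) := h1
          _ = m^k * m := by ring
          _ ≤ m^k * t^(k+1) := Nat.mul_le_mul_left _ hP
      have h3 : (m/t)^(k+1) ≤ m^k := Nat.le_of_mul_le_mul_right h2 (by positivity)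
      have h4 := le_c_rpow (k:=k) (m:=m) (a:=m/t) (C:=1) zero_le_one
        (by rw [one_pow, one_mul]; exact_mod_cast h3)
      simpa using h4
    have hDtk1 : ((t^(k-1):ℕ):ℝ) ≤ ((t^k:ℕ):ℝ) := by
      exact_mod_cast Nat.pow_le_pow_right (by omega) (by omega)
    have hcast : (n:ℝ) ≤ ((t^k:ℕ):ℝ) + (k:ℝ) * (((m/t:ℕ):ℝ) + ((t^(k-1):ℕ):ℝ)) := by
      exact_mod_cast hnle
    calc (n:ℝ) ≤ ((t^k:ℕ):ℝ) + (k:ℝ) * (((m/t:ℕ):ℝ) + ((t^(k-1):ℕ):ℝ)) := hcast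
      _ ≤ 2^(k+1) * (m:ℝ)^((k:ℝ)/(k+1)) + (k:ℝ) * ((m:ℝ)^((k:ℝ)/(k+1))
            + 2^(k+1) * (m:ℝ)^((k:ℝ)/(k+1))) := by
          gcongr
          exact hDtk1.trans hBtk
      _ = ((2:ℝ)^(k+1) + k + k * 2^(k+1)) * (m:ℝ)^((k:ℝ)/(k+1)) := by ring
end
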